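/- arXiv:1006.4916 — 5 statements merged into one kernel-verified Lean document; each statement's English description precedes it below -/
import Mathlib

section
/- Fix r > 0. Let μ, g : [0,∞) → [0,∞) be continuously differentiable bounded functions with μ(0) = g(0) = 0 and μ(σ) > 0, g(σ) > 0 for all σ > 0, let b ≥ 0, and let D, s_in : [0,r] → [0,∞) be measurable and bounded. Suppose (x,s) and (ξ,σ) are two continuous functions on [0,r] with x(t), ξ(t) > 0 and s(t), σ(t) > 0 for all t, each satisfying the integral form of the single-species chemostat equations: x(t) = x(0) + ∫₀ᵗ (μ(s(τ)) − D(τ) − b)x(τ)dτ, s(t) = s(0) + ∫₀ᵗ [D(τ)(s_in(τ) − s(τ)) − g(s(τ))x(τ)]dτ (and similarly for (ξ,σ)). If s(t) = σ(t) for all t ∈ [0,r], then x(0) = ξ(0). In other words, the single-species chemostat is strongly observable in time r for every r > 0. -/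
open Real Set MeasureTheory
open scoped Topology

/-- The single-species chemostat is strongly observable in time `r` for every `r > 0`:
two positive solutions on `[0,r]` (in integral form) with the same inputs and identical
substrate output must have the same initial biomass. -/
theorem single_species_chemostat_strongly_observable
    (r : ℝ) (hr : 0 < r)
    (μ g : ℝ → ℝ)
    (hμC : ContDiffOn ℝ 1 μ (Ici 0)) (hgC : ContDiffOn ℝ 1 g (Ici 0))
    (hμbdd : ∃ M, ∀ u ≥ (0:ℝ), μ u ≤ M) (hgbdd : ∃ M, ∀ u ≥ (0:ℝ), g u ≤ M)
    (hμnn : ∀ u ≥ (0:ℝ), 0 ≤ μ u) (hgnn : ∀ u ≥ (0:ℝ), 0 ≤ g u)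
    (hμ0 : μ 0 = 0) (hg0 : g 0 = 0)
    (hμpos : ∀ u > (0:ℝ), 0 < μ u) (hgpos : ∀ u > (0:ℝ), 0 < g u)
    (b : ℝ) (hb : 0 ≤ b)
    (D sIn : ℝ → ℝ)
    (hDmeas : Measurable D) (hsInmeas : Measurable sIn)
    (hDnn : ∀ t ∈ Icc 0 r, 0 ≤ D t) (hsInnn : ∀ t ∈ Icc 0 r, 0 ≤ sIn t)
    (hDbdd : ∃ M, ∀ t ∈ Icc 0 r, D t ≤ M) (hsInbdd : ∃ M, ∀ t ∈ Icc 0 r, sIn t ≤ M)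
    (x s ξ σ : ℝ → ℝ)
    (hxC : ContinuousOn x (Icc 0 r)) (hsC : ContinuousOn s (Icc 0 r))
    (hξC : ContinuousOn ξ (Icc 0 r)) (hσC : ContinuousOn σ (Icc 0 r))
    (hxpos : ∀ t ∈ Icc 0 r, 0 < x t) (hspos : ∀ t ∈ Icc 0 r, 0 < s t)
    (hξpos : ∀ t ∈ Icc 0 r, 0 < ξ t) (hσpos : ∀ t ∈ Icc 0 r, 0 < σ t)
    (hxeq : ∀ t ∈ Icc 0 r, x t = x 0 + ∫ τ in (0:ℝ)..t, (μ (s τ) - D τ - b) * x τ)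
    (hseq : ∀ t ∈ Icc 0 r,
      s t = s 0 + ∫ τ in (0:ℝ)..t, (D τ * (sIn τ - s τ) - g (s τ) * x τ))
    (hξeq : ∀ t ∈ Icc 0 r, ξ t = ξ 0 + ∫ τ in (0:ℝ)..t, (μ (σ τ) - D τ - b) * ξ τ)
    (hσeq : ∀ t ∈ Icc 0 r,
      σ t = σ 0 + ∫ τ in (0:ℝ)..t, (D τ * (sIn τ - σ τ) - g (σ τ) * ξ τ))
    (hout : ∀ t ∈ Icc 0 r, s t = σ t) :
    x 0 = ξ 0 := by
  have h0mem : (0:ℝ) ∈ Icc 0 r := ⟨le_refl 0, hr.le⟩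
  -- the difference function
  set h : ℝ → ℝ := fun τ => g (s τ) * (ξ τ - x τ) with hhdef
  have hsmap : MapsTo s (Icc 0 r) (Ici 0) := fun t ht => (hspos t ht).le
  have hgs : ContinuousOn (fun τ => g (s τ)) (Icc 0 r) :=
    hgC.continuousOn.comp hsC hsmap
  have hhC : ContinuousOn h (Icc 0 r) := hgs.mul (hξC.sub hxC)
  -- integrability of the ξ-integrand
  have hf2C : ContinuousOn (fun τ => g (s τ) * ξ τ) (Icc 0 r) := hgs.mul hξC
  obtain ⟨MD, hMD⟩ := hDbdd
  obtain ⟨MI, hMI⟩ := hsInbdd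
  obtain ⟨Ms, hMs⟩ := (isCompact_Icc).exists_bound_of_continuousOn hsC
  obtain ⟨Mg, hMg⟩ := (isCompact_Icc).exists_bound_of_continuousOn hf2C
  set f2 : ℝ → ℝ := fun τ => D τ * (sIn τ - s τ) - g (s τ) * ξ τ with hf2def
  have haem : AEStronglyMeasurable f2 (volume.restrict (Icc 0 r)) := by
    apply AEStronglyMeasurable.sub
    · exact (hDmeas.aestronglyMeasurable.mul
        ((hsInmeas.aestronglyMeasurable.sub
          (hsC.aemeasurable measurableSet_Icc).aestronglyMeasurable)))
    · exact (hf2C.aemeasurable measurableSet_Icc).aestronglyMeasurable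
  have hint : IntegrableOn f2 (Icc 0 r) volume := by
    refine ⟨haem, ?_⟩
    apply MeasureTheory.HasFiniteIntegral.restrict_of_bounded
      (C := |MD| * (|MI| + |Ms|) + |Mg|) measure_Icc_lt_top
    rw [ae_restrict_iff' measurableSet_Icc]
    filter_upwards with τ hτ
    have h1 : ‖D τ‖ ≤ |MD| := by
      rw [Real.norm_eq_abs, abs_of_nonneg (hDnn τ hτ)]
      exact (hMD τ hτ).trans (le_abs_self _)
    have h2 : ‖sIn τ - s τ‖ ≤ |MI| + |Ms| := by
      refine (norm_sub_le _ _).trans (add_le_add ?_ ?_)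
      · rw [Real.norm_eq_abs, abs_of_nonneg (hsInnn τ hτ)]
        exact (hMI τ hτ).trans (le_abs_self _)
      · exact (hMs τ hτ).trans (le_abs_self _)
    calc ‖f2 τ‖ ≤ ‖D τ * (sIn τ - s τ)‖ + ‖g (s τ) * ξ τ‖ := norm_sub_le _ _
      _ ≤ |MD| * (|MI| + |Ms|) + |Mg| := by
          refine add_le_add ?_ ((hMg τ hτ).trans (le_abs_self _))
          rw [norm_mul]
          exact mul_le_mul h1 h2 (norm_nonneg _) (abs_nonneg _)
  -- key: the integral of h vanishes on [0,r]
  have key : ∀ t ∈ Icc 0 r, (∫ τ in (0:ℝ)..t, h τ) = 0 := by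
    intro t ht
    have hsub : Icc (0:ℝ) t ⊆ Icc 0 r := Icc_subset_Icc le_rfl ht.2
    have hint2 : IntervalIntegrable f2 volume 0 t := by
      rw [intervalIntegrable_iff_integrableOn_Icc_of_le ht.1]
      exact hint.mono_set hsub
    have hinth : IntervalIntegrable h volume 0 t := by
      rw [intervalIntegrable_iff_integrableOn_Icc_of_le ht.1]
      exact (hhC.mono hsub).integrableOn_compact isCompact_Icc
    have e1 := hseq t ht
    have e2 := hσeq t ht
    have hσint : (∫ τ in (0:ℝ)..t, (D τ * (sIn τ - σ τ) - g (σ τ) * ξ τ))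
        = ∫ τ in (0:ℝ)..t, f2 τ := by
      apply intervalIntegral.integral_congr
      intro τ hτ
      rw [uIcc_of_le ht.1] at hτ
      rw [hf2def]
      simp only [hout τ (hsub hτ)]
    have hf1 : ∀ τ, (D τ * (sIn τ - s τ) - g (s τ) * x τ) = f2 τ + h τ := by
      intro τ; rw [hf2def, hhdef]; ring
    have e1' : s t = s 0 + ((∫ τ in (0:ℝ)..t, f2 τ) + ∫ τ in (0:ℝ)..t, h τ) := by
      rw [← intervalIntegral.integral_add hint2 hinth]
      simpa only [hf1] using e1
    have e2' : s t = s 0 + ∫ τ in (0:ℝ)..t, f2 τ := by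
      rw [hout t ht, hout 0 h0mem] at e1' ⊢
      rw [e2, hσint]
    rw [e2'] at e1'
    linarith
  -- FTC: derivative of the vanishing integral at 0 gives h 0 = 0
  have hmem : Icc (0:ℝ) r ∈ 𝓝[≥] (0:ℝ) := by
    rw [mem_nhdsWithin_iff_exists_mem_nhds_inter]
    exact ⟨Iio r, Iio_mem_nhds hr, fun y hy => ⟨hy.2, hy.1.le⟩⟩
  have hmem' : Icc (0:ℝ) r ∈ 𝓝[>] (0:ℝ) :=
    nhdsWithin_mono 0 (fun y (hy : y ∈ Ioi 0) => hy.le) hmem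
  have hsmeas : StronglyMeasurableAtFilter h (𝓝[>] (0:ℝ)) volume :=
    ⟨Icc 0 r, hmem', ((hhC.aemeasurable measurableSet_Icc).aestronglyMeasurable)⟩
  have hcw : ContinuousWithinAt h (Ioi 0) 0 :=
    (hhC 0 h0mem).mono_of_mem_nhdsWithin hmem'
  have hderiv : HasDerivWithinAt (fun u => ∫ τ in (0:ℝ)..u, h τ) (h 0) (Ici 0) 0 :=
    intervalIntegral.integral_hasDerivWithinAt_right
      (IntervalIntegrable.refl)
      hsmeas hcw
  have hderiv' : HasDerivWithinAt (fun u => ∫ τ in (0:ℝ)..u, h τ) (h 0) (Icc 0 r) 0 :=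
    hderiv.mono (fun y hy => hy.1)
  have hzero : HasDerivWithinAt (fun u => ∫ τ in (0:ℝ)..u, h τ) 0 (Icc 0 r) 0 := by
    have hconst : HasDerivWithinAt (fun _ : ℝ => (0:ℝ)) 0 (Icc 0 r) 0 :=
      (hasDerivWithinAt_const 0 (Icc 0 r) 0)
    exact hconst.congr (fun y hy => key y hy) (key 0 h0mem)
  have hud : UniqueDiffWithinAt ℝ (Icc (0:ℝ) r) 0 :=
    (uniqueDiffOn_Icc hr) 0 h0mem
  have hh0 : h 0 = 0 := by
    rw [← hderiv'.derivWithin hud, hzero.derivWithin hud]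
  -- conclude
  have hgpos0 : 0 < g (s 0) := hgpos _ (hspos 0 h0mem)
  have : ξ 0 - x 0 = 0 := by
    rcases mul_eq_zero.mp hh0 with h' | h'
    · exact absurd h' hgpos0.ne'
    · exact h'
  linarith
end

section
/- Fix r > 0. Let μ, g : [0,∞) → [0,∞) be continuously differentiable bounded functions with μ(0) = g(0) = 0 and μ(σ) > 0, g(σ) > 0 for all σ > 0, let b ≥ 0, and let D, s_in : [0,r] → [0,∞) be measurable and bounded. Let (x,s) be a solution of the single-species chemostat on [0,r] with x(t) > 0 and s(t) > 0 for all t. Define p(t) := s(t) − s(0) − ∫₀ᵗ D(w)(s_in(w) − s(w))dw and q(t) := −∫₀ᵗ g(s(ρ)) exp(∫₀^ρ (μ(s(w)) − D(w) − b)dw)dρ. Then q(t) < 0 for all t ∈ (0,r], so ∫₀ʳ q²(t)dt > 0, and the dead-beat reconstruction formula holds: x(r) = exp(∫₀ʳ (μ(s(w)) − D(w) − b)dw) · (∫₀ʳ p(t)q(t)dt) / (∫₀ʳ q²(t)dt). -/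
open Real Set MeasureTheory


lemma primitive_fubini {t : ℝ} {φ ψ : ℝ → ℝ}
    (hφ : IntegrableOn φ (Ioc 0 t)) (hψ : IntegrableOn ψ (Ioc 0 t)) :
    (∫ τ in Ioc (0:ℝ) t, φ τ) * (∫ τ in Ioc (0:ℝ) t, ψ τ)
      = (∫ τ in Ioc (0:ℝ) t, φ τ * ∫ σ in Ioc (0:ℝ) τ, ψ σ)
        + (∫ τ in Ioc (0:ℝ) t, ψ τ * ∫ σ in Ioc (0:ℝ) τ, φ σ) := by
  set ν := volume.restrict (Ioc (0:ℝ) t) with hν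
  set G : ℝ × ℝ → ℝ := fun p => φ p.1 * ψ p.2 with hGdef
  have hG : Integrable G (ν.prod ν) := hφ.mul_prod hψ
  have hS : MeasurableSet {p : ℝ × ℝ | p.2 ≤ p.1} :=
    measurableSet_le measurable_snd measurable_fst
  have hS' : MeasurableSet {p : ℝ × ℝ | p.1 < p.2} :=
    measurableSet_lt measurable_fst measurable_snd
  have h1 : Integrable ({p : ℝ × ℝ | p.2 ≤ p.1}.indicator G) (ν.prod ν) := hG.indicator hS
  have h2 : Integrable ({p : ℝ × ℝ | p.1 < p.2}.indicator G) (ν.prod ν) := hG.indicator hS'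
  have key : (∫ τ in Ioc (0:ℝ) t, φ τ) * (∫ τ in Ioc (0:ℝ) t, ψ τ)
      = (∫ p, ({p : ℝ × ℝ | p.2 ≤ p.1}.indicator G) p ∂(ν.prod ν))
        + (∫ p, ({p : ℝ × ℝ | p.1 < p.2}.indicator G) p ∂(ν.prod ν)) := by
    rw [← integral_add h1 h2]
    rw [← integral_prod_mul (μ := ν) (ν := ν) φ ψ]
    apply integral_congr_ae
    filter_upwards with p
    by_cases h : p.2 ≤ p.1
    · simp [hGdef, Set.indicator_apply, h, not_lt.2 h]
    · simp [hGdef, Set.indicator_apply, h, lt_of_not_ge h]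
  have e1 : (∫ p, ({p : ℝ × ℝ | p.2 ≤ p.1}.indicator G) p ∂(ν.prod ν))
      = ∫ τ in Ioc (0:ℝ) t, φ τ * ∫ σ in Ioc (0:ℝ) τ, ψ σ := by
    rw [integral_prod _ h1]
    apply integral_congr_ae
    filter_upwards [ae_restrict_mem measurableSet_Ioc] with τ hτ
    have hfun : (fun σ => ({p : ℝ × ℝ | p.2 ≤ p.1}.indicator G) (τ, σ))
        = (Iic τ).indicator (fun σ => φ τ * ψ σ) := by
      ext σ
      by_cases h : σ ≤ τ <;> simp [hGdef, Set.indicator_apply, h]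
    rw [hfun, integral_indicator measurableSet_Iic, hν,
      Measure.restrict_restrict measurableSet_Iic]
    have hset : Iic τ ∩ Ioc 0 t = Ioc 0 τ := by
      ext y
      simp only [mem_inter_iff, mem_Iic, mem_Ioc]
      exact ⟨fun h => ⟨h.2.1, h.1⟩, fun h => ⟨h.2, h.1, h.2.trans hτ.2⟩⟩
    rw [hset, integral_const_mul]
  have e2 : (∫ p, ({p : ℝ × ℝ | p.1 < p.2}.indicator G) p ∂(ν.prod ν))
      = ∫ σ in Ioc (0:ℝ) t, ψ σ * ∫ τ in Ioc (0:ℝ) σ, φ τ := by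
    rw [integral_prod_symm _ h2]
    apply integral_congr_ae
    filter_upwards [ae_restrict_mem measurableSet_Ioc] with σ hσ
    have hfun : (fun τ => ({p : ℝ × ℝ | p.1 < p.2}.indicator G) (τ, σ))
        = (Iio σ).indicator (fun τ => φ τ * ψ σ) := by
      ext τ
      by_cases h : τ < σ <;> simp [hGdef, Set.indicator_apply, h]
    rw [hfun, integral_indicator measurableSet_Iio, hν,
      Measure.restrict_restrict measurableSet_Iio]
    have hset : Iio σ ∩ Ioc 0 t = Ioo 0 σ := by
      ext y
      simp only [mem_inter_iff, mem_Iio, mem_Ioc, mem_Ioo]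
      exact ⟨fun h => ⟨h.2.1, h.1⟩, fun h => ⟨h.2, h.1, h.2.le.trans hσ.2⟩⟩
    rw [hset, integral_mul_const, ← integral_Ioc_eq_integral_Ioo, mul_comm]
  rw [key, e1, e2]

lemma integrableOn_icc_of_ioc {r : ℝ} {φ : ℝ → ℝ} (hφ : IntegrableOn φ (Ioc 0 r)) :
    IntegrableOn φ (Icc 0 r) := by
  rwa [IntegrableOn, Measure.restrict_congr_set Ioc_ae_eq_Icc] at hφ

lemma integrableOn_mul_cont {r t : ℝ} (ht : t ∈ Icc (0:ℝ) r) {φ c : ℝ → ℝ}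
    (hφ : IntegrableOn φ (Ioc 0 r)) (hc : ContinuousOn c (Icc 0 r)) :
    IntegrableOn (fun τ => φ τ * c τ) (Ioc 0 t) := by
  have hm : AEStronglyMeasurable c (volume.restrict (Ioc 0 r)) :=
    (hc.mono Ioc_subset_Icc_self).aestronglyMeasurable measurableSet_Ioc
  obtain ⟨C, hC⟩ := isCompact_Icc.exists_bound_of_continuousOn hc
  have hb : ∀ᵐ τ ∂volume.restrict (Ioc (0:ℝ) r), ‖c τ‖ ≤ C := by
    filter_upwards [ae_restrict_mem measurableSet_Ioc] with τ hτ
    exact hC τ (Ioc_subset_Icc_self hτ)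
  have h1 : IntegrableOn (fun τ => c τ * φ τ) (Ioc 0 r) := hφ.bdd_mul hm hb
  have h2 : IntegrableOn (fun τ => φ τ * c τ) (Ioc 0 r) :=
    h1.congr (ae_of_all _ fun τ => mul_comm _ _)
  exact h2.mono_set (Ioc_subset_Ioc_right ht.2)

lemma primitive_pow {r : ℝ} {φ : ℝ → ℝ} (hφ : IntegrableOn φ (Ioc 0 r)) (n : ℕ) :
    ∀ t ∈ Icc (0:ℝ) r,
      (∫ τ in Ioc (0:ℝ) t, φ τ) ^ (n + 1)
        = ((n:ℝ) + 1) * ∫ τ in Ioc (0:ℝ) t, φ τ * (∫ σ in Ioc (0:ℝ) τ, φ σ) ^ n := by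
  have hΦc : ContinuousOn (fun u => ∫ τ in Ioc (0:ℝ) u, φ τ) (Icc 0 r) :=
    intervalIntegral.continuousOn_primitive (integrableOn_icc_of_ioc hφ)
  induction n with
  | zero =>
    intro t ht
    simp
  | succ n IH =>
    intro t ht
    set Φ : ℝ → ℝ := fun u => ∫ τ in Ioc (0:ℝ) u, φ τ with hΦ
    set ψ : ℝ → ℝ := fun τ => ((n:ℝ) + 1) * (φ τ * Φ τ ^ n) with hψdef
    have hψr : IntegrableOn ψ (Ioc 0 r) :=
      (integrableOn_mul_cont (right_mem_Icc.2 (ht.1.trans ht.2)) hφ (hΦc.pow n)).const_mul _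
    have hψt : IntegrableOn ψ (Ioc 0 t) := hψr.mono_set (Ioc_subset_Ioc_right ht.2)
    have hφt : IntegrableOn φ (Ioc 0 t) := hφ.mono_set (Ioc_subset_Ioc_right ht.2)
    have hIH' : ∀ τ ∈ Icc (0:ℝ) r, Φ τ ^ (n + 1) = ∫ σ in Ioc (0:ℝ) τ, ψ σ := by
      intro τ hτ
      rw [IH τ hτ]
      rw [MeasureTheory.integral_const_mul]
    have fub := primitive_fubini hφt hψt
    have lhs : Φ t * (∫ τ in Ioc (0:ℝ) t, ψ τ) = Φ t ^ (n + 2) := by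
      rw [← hIH' t ht]; ring
    have re1 : (∫ τ in Ioc (0:ℝ) t, φ τ * ∫ σ in Ioc (0:ℝ) τ, ψ σ)
        = ∫ τ in Ioc (0:ℝ) t, φ τ * Φ τ ^ (n + 1) := by
      apply setIntegral_congr_fun measurableSet_Ioc
      intro τ hτ
      show φ τ * (∫ σ in Ioc (0:ℝ) τ, ψ σ) = φ τ * Φ τ ^ (n + 1)
      rw [← hIH' τ ⟨hτ.1.le, hτ.2.trans ht.2⟩]
    have re2 : (∫ τ in Ioc (0:ℝ) t, ψ τ * ∫ σ in Ioc (0:ℝ) τ, φ σ)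
        = ((n:ℝ) + 1) * ∫ τ in Ioc (0:ℝ) t, φ τ * Φ τ ^ (n + 1) := by
      rw [← MeasureTheory.integral_const_mul]
      apply setIntegral_congr_fun measurableSet_Ioc
      intro τ hτ
      show ψ τ * Φ τ = ((n:ℝ) + 1) * (φ τ * Φ τ ^ (n + 1))
      rw [hψdef]; ring
    rw [lhs, re1, re2] at fub
    rw [fub]
    push_cast
    ring

lemma hasSum_exp_real (y : ℝ) : HasSum (fun n : ℕ => y ^ n / (Nat.factorial n)) (Real.exp y) := by
  rw [Real.exp_eq_exp_ℝ]
  exact NormedSpace.expSeries_div_hasSum_exp y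

lemma exp_primitive_eq {r : ℝ} {f : ℝ → ℝ} (hf : IntegrableOn f (Ioc 0 r)) :
    ∀ t ∈ Icc (0:ℝ) r,
      Real.exp (∫ τ in Ioc (0:ℝ) t, f τ)
        = 1 + ∫ τ in Ioc (0:ℝ) t, f τ * Real.exp (∫ σ in Ioc (0:ℝ) τ, f σ) := by
  intro t ht
  set F : ℝ → ℝ := fun u => ∫ τ in Ioc (0:ℝ) u, f τ with hFdef
  have hFc : ContinuousOn F (Icc 0 r) :=
    intervalIntegral.continuousOn_primitive (integrableOn_icc_of_ioc hf)
  obtain ⟨M, hM⟩ := isCompact_Icc.exists_bound_of_continuousOn hFc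
  have h0r : (0:ℝ) ∈ Icc (0:ℝ) r := ⟨le_refl 0, ht.1.trans ht.2⟩
  have hM0 : 0 ≤ M := (norm_nonneg (F 0)).trans (hM 0 h0r)
  -- each term integrable
  have hterm : ∀ n : ℕ, IntegrableOn (fun τ => f τ * (F τ ^ n / (Nat.factorial n))) (Ioc 0 t) := by
    intro n
    exact integrableOn_mul_cont ht hf ((hFc.pow n).div_const _)
  -- dominated convergence for sums
  have hsum : HasSum (fun n : ℕ => ∫ τ in Ioc (0:ℝ) t, f τ * (F τ ^ n / (Nat.factorial n)))
      (∫ τ in Ioc (0:ℝ) t, f τ * Real.exp (F τ)) := by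
    apply MeasureTheory.hasSum_integral_of_dominated_convergence
      (bound := fun (n : ℕ) (τ : ℝ) => |f τ| * (M ^ n / (Nat.factorial n)))
    · intro n; exact (hterm n).1
    · intro n
      filter_upwards [ae_restrict_mem measurableSet_Ioc] with τ hτ
      have hFb : |F τ| ≤ M := hM τ ⟨hτ.1.le, hτ.2.trans ht.2⟩
      have h1 : |F τ ^ n| ≤ M ^ n := by
        rw [abs_pow]; exact pow_le_pow_left₀ (abs_nonneg _) hFb n
      calc ‖f τ * (F τ ^ n / (Nat.factorial n))‖ = |f τ| * (|F τ ^ n| / (Nat.factorial n)) := by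
            rw [norm_mul, Real.norm_eq_abs, Real.norm_eq_abs, abs_div, Nat.abs_cast]
        _ ≤ |f τ| * (M ^ n / (Nat.factorial n)) := by
            apply mul_le_mul_of_nonneg_left _ (abs_nonneg _)
            apply div_le_div_of_nonneg_right h1 ?_ |>.trans_eq rfl
            · positivity
    · filter_upwards with τ
      exact ((NormedSpace.expSeries_div_summable M).mul_left _)
    · have : (fun τ => ∑' n : ℕ, |f τ| * (M ^ n / (Nat.factorial n))) = fun τ => |f τ| * Real.exp M := by
        funext τ
        rw [tsum_mul_left, (hasSum_exp_real M).tsum_eq]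
      rw [this]
      exact ((hf.mono_set (Ioc_subset_Ioc_right ht.2)).abs).mul_const _
    · filter_upwards with τ
      exact (hasSum_exp_real (F τ)).mul_left (f τ)
  -- compute each term
  have hterm_eq : ∀ n : ℕ, (∫ τ in Ioc (0:ℝ) t, f τ * (F τ ^ n / (Nat.factorial n)))
      = F t ^ (n + 1) / (Nat.factorial (n+1)) := by
    intro n
    have h1 : (∫ τ in Ioc (0:ℝ) t, f τ * (F τ ^ n / (Nat.factorial n)))
        = (∫ τ in Ioc (0:ℝ) t, f τ * F τ ^ n) / (Nat.factorial n) := by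
      rw [← integral_div]
      congr 1; funext τ; ring
    have h2 := primitive_pow hf n t ht
    rw [h1]
    have hfact : ((Nat.factorial (n+1)) : ℝ) = ((n:ℝ) + 1) * (Nat.factorial n) := by
      rw [Nat.factorial_succ]; push_cast; ring
    have hne : ((n:ℝ) + 1) ≠ 0 := by positivity
    have hne2 : ((Nat.factorial n : ℕ) : ℝ) ≠ 0 := Nat.cast_ne_zero.2 (Nat.factorial_ne_zero n)
    have h2' : F t ^ (n+1) = ((n:ℝ)+1) * ∫ τ in Ioc (0:ℝ) t, f τ * F τ ^ n := h2
    rw [hfact, h2', mul_div_mul_left _ _ hne]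
  have hsum2 : HasSum (fun n : ℕ => F t ^ (n + 1) / (Nat.factorial (n+1))) (Real.exp (F t) - 1) := by
    have h := hasSum_exp_real (F t)
    have := (hasSum_nat_add_iff' (f := fun n : ℕ => F t ^ n / (Nat.factorial n)) 1).2 h
    simpa using this
  have := hsum2.unique (by simpa only [hterm_eq] using hsum : HasSum _ _)
  linarith [this]

lemma linear_volterra_rep {r : ℝ} (hr : 0 ≤ r) {f x : ℝ → ℝ}
    (hf : IntegrableOn f (Ioc 0 r)) (hx : ContinuousOn x (Icc 0 r))
    (hxeq : ∀ t ∈ Icc (0:ℝ) r, x t = x 0 + ∫ τ in Ioc (0:ℝ) t, f τ * x τ) :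
    ∀ t ∈ Icc (0:ℝ) r, x t = x 0 * Real.exp (∫ τ in Ioc (0:ℝ) t, f τ) := by
  set F : ℝ → ℝ := fun u => ∫ τ in Ioc (0:ℝ) u, f τ with hFdef
  have hFc : ContinuousOn F (Icc 0 r) :=
    intervalIntegral.continuousOn_primitive (integrableOn_icc_of_ioc hf)
  have hEc : ContinuousOn (fun u => Real.exp (F u)) (Icc 0 r) :=
    Real.continuous_exp.comp_continuousOn hFc
  set z : ℝ → ℝ := fun u => x u - x 0 * Real.exp (F u) with hzdef
  have hzc : ContinuousOn z (Icc 0 r) := hx.sub (continuousOn_const.mul hEc)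
  have hzeq : ∀ t ∈ Icc (0:ℝ) r, z t = ∫ τ in Ioc (0:ℝ) t, f τ * z τ := by
    intro t ht
    have hE := exp_primitive_eq hf t ht
    have h1 : x 0 * Real.exp (F t)
        = x 0 + ∫ τ in Ioc (0:ℝ) t, f τ * (x 0 * Real.exp (F τ)) := by
      have : (∫ τ in Ioc (0:ℝ) t, f τ * (x 0 * Real.exp (F τ)))
          = x 0 * ∫ τ in Ioc (0:ℝ) t, f τ * Real.exp (F τ) := by
        rw [← integral_const_mul]
        congr 1; funext τ; ring
      rw [this, hE]; ring
    have hxi : IntegrableOn (fun τ => f τ * x τ) (Ioc 0 t) :=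
      integrableOn_mul_cont ht hf hx
    have hEi : IntegrableOn (fun τ => f τ * (x 0 * Real.exp (F τ))) (Ioc 0 t) :=
      integrableOn_mul_cont ht hf (continuousOn_const.mul hEc)
    have : z t = (∫ τ in Ioc (0:ℝ) t, f τ * x τ)
        - ∫ τ in Ioc (0:ℝ) t, f τ * (x 0 * Real.exp (F τ)) := by
      rw [hzdef]; dsimp only; rw [hxeq t ht, h1]; ring
    rw [this, ← integral_sub hxi hEi]
    congr 1; funext τ; rw [hzdef]; ring
  obtain ⟨M, hM⟩ := isCompact_Icc.exists_bound_of_continuousOn hzc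
  have h0r : (0:ℝ) ∈ Icc (0:ℝ) r := ⟨le_refl 0, hr⟩
  have hM0 : 0 ≤ M := (norm_nonneg (z 0)).trans (hM 0 h0r)
  have hfabs : IntegrableOn (fun τ => |f τ|) (Ioc 0 r) := hf.abs
  set H : ℝ → ℝ := fun u => ∫ τ in Ioc (0:ℝ) u, |f τ| with hHdef
  have hHc : ContinuousOn H (Icc 0 r) :=
    intervalIntegral.continuousOn_primitive (integrableOn_icc_of_ioc hfabs)
  have key : ∀ n : ℕ, ∀ u ∈ Icc (0:ℝ) r, |z u| ≤ M * H u ^ n / (Nat.factorial n) := by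
    intro n
    induction n with
    | zero =>
      intro u hu
      simpa using (hM u hu)
    | succ n IH =>
      intro u hu
      have hzu := hzeq u hu
      have hfzi : IntegrableOn (fun τ => f τ * z τ) (Ioc 0 u) :=
        integrableOn_mul_cont hu hf hzc
      have step1 : |z u| ≤ ∫ τ in Ioc (0:ℝ) u, |f τ * z τ| := by
        rw [hzu]
        have := MeasureTheory.norm_integral_le_integral_norm
          (μ := volume.restrict (Ioc (0:ℝ) u)) (f := fun τ => f τ * z τ)
        simpa [Real.norm_eq_abs, abs_mul] using this
      have hRHSi : IntegrableOn
          (fun τ => (M / (Nat.factorial n)) * (|f τ| * H τ ^ n)) (Ioc 0 u) :=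
        (integrableOn_mul_cont hu hfabs (hHc.pow n)).const_mul _
      have step2 : (∫ τ in Ioc (0:ℝ) u, |f τ * z τ|)
          ≤ ∫ τ in Ioc (0:ℝ) u, (M / (Nat.factorial n)) * (|f τ| * H τ ^ n) := by
        apply setIntegral_mono_on hfzi.abs hRHSi measurableSet_Ioc
        intro τ hτ
        have hIH := IH τ ⟨hτ.1.le, hτ.2.trans hu.2⟩
        calc |f τ * z τ| = |f τ| * |z τ| := abs_mul _ _
          _ ≤ |f τ| * (M * H τ ^ n / (Nat.factorial n)) :=
              mul_le_mul_of_nonneg_left hIH (abs_nonneg _)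
          _ = (M / (Nat.factorial n)) * (|f τ| * H τ ^ n) := by ring
      have step3 : (∫ τ in Ioc (0:ℝ) u, (M / (Nat.factorial n)) * (|f τ| * H τ ^ n))
          = M * H u ^ (n+1) / (Nat.factorial (n+1)) := by
        rw [integral_const_mul]
        have hm := primitive_pow hfabs n u hu
        have hm' : H u ^ (n+1) = ((n:ℝ)+1) * ∫ τ in Ioc (0:ℝ) u, |f τ| * H τ ^ n := hm
        have hfact : ((Nat.factorial (n+1)) : ℝ) = ((n:ℝ) + 1) * (Nat.factorial n) := by
          rw [Nat.factorial_succ]; push_cast; ring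
        have hne : ((n:ℝ) + 1) ≠ 0 := by positivity
        have hne2 : ((Nat.factorial n : ℕ) : ℝ) ≠ 0 :=
          Nat.cast_ne_zero.2 (Nat.factorial_ne_zero n)
        rw [hfact, hm']
        field_simp
      calc |z u| ≤ _ := step1
        _ ≤ _ := step2
        _ = _ := step3
  intro t ht
  have hlim : Filter.Tendsto (fun n : ℕ => M * H t ^ n / (Nat.factorial n))
      Filter.atTop (nhds 0) := by
    have := (FloorSemiring.tendsto_pow_div_factorial_atTop (H t)).const_mul M
    simpa [mul_div_assoc] using this
  have hz0 : |z t| ≤ 0 := ge_of_tendsto hlim (Filter.Eventually.of_forall fun n => key n t ht)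
  have hz : z t = 0 := abs_eq_zero.1 (le_antisymm hz0 (abs_nonneg _))
  have hz' : x t - x 0 * Real.exp (F t) = 0 := hz
  linarith

/-- The dead-beat reconstruction formula for the single-species chemostat:
`q(t) < 0` on `(0,r]`, hence `∫₀ʳ q² > 0`, and
`x(r) = exp(∫₀ʳ (μ(s)−D−b)) ⬝ (∫₀ʳ p q) / (∫₀ʳ q²)`. -/
theorem single_species_chemostat_deadbeat_formula
    (r : ℝ) (hr : 0 < r)
    (μ g : ℝ → ℝ)
    (hμC : ContDiffOn ℝ 1 μ (Ici 0)) (hgC : ContDiffOn ℝ 1 g (Ici 0))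
    (hμbdd : ∃ M, ∀ u ≥ (0:ℝ), μ u ≤ M) (hgbdd : ∃ M, ∀ u ≥ (0:ℝ), g u ≤ M)
    (hμnn : ∀ u ≥ (0:ℝ), 0 ≤ μ u) (hgnn : ∀ u ≥ (0:ℝ), 0 ≤ g u)
    (hμ0 : μ 0 = 0) (hg0 : g 0 = 0)
    (hμpos : ∀ u > (0:ℝ), 0 < μ u) (hgpos : ∀ u > (0:ℝ), 0 < g u)
    (b : ℝ) (hb : 0 ≤ b)
    (D sIn : ℝ → ℝ)
    (hDmeas : Measurable D) (hsInmeas : Measurable sIn)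
    (hDnn : ∀ t ∈ Icc 0 r, 0 ≤ D t) (hsInnn : ∀ t ∈ Icc 0 r, 0 ≤ sIn t)
    (hDbdd : ∃ M, ∀ t ∈ Icc 0 r, D t ≤ M) (hsInbdd : ∃ M, ∀ t ∈ Icc 0 r, sIn t ≤ M)
    (x s : ℝ → ℝ)
    (hxC : ContinuousOn x (Icc 0 r)) (hsC : ContinuousOn s (Icc 0 r))
    (hxpos : ∀ t ∈ Icc 0 r, 0 < x t) (hspos : ∀ t ∈ Icc 0 r, 0 < s t)
    (hxeq : ∀ t ∈ Icc 0 r, x t = x 0 + ∫ τ in (0:ℝ)..t, (μ (s τ) - D τ - b) * x τ)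
    (hseq : ∀ t ∈ Icc 0 r,
      s t = s 0 + ∫ τ in (0:ℝ)..t, (D τ * (sIn τ - s τ) - g (s τ) * x τ))
    (p q : ℝ → ℝ)
    (hp : ∀ t ∈ Icc 0 r,
      p t = s t - s 0 - ∫ w in (0:ℝ)..t, D w * (sIn w - s w))
    (hq : ∀ t ∈ Icc 0 r,
      q t = -∫ ρ in (0:ℝ)..t,
        g (s ρ) * Real.exp (∫ w in (0:ℝ)..ρ, (μ (s w) - D w - b))) :
    (∀ t ∈ Ioc 0 r, q t < 0) ∧
    (0 < ∫ t in (0:ℝ)..r, (q t) ^ 2) ∧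
    x r = Real.exp (∫ w in (0:ℝ)..r, (μ (s w) - D w - b)) *
      ((∫ t in (0:ℝ)..r, p t * q t) / ∫ t in (0:ℝ)..r, (q t) ^ 2) := by
  have hr0 : (0:ℝ) ≤ r := hr.le
  have hIocIcc : Ioc (0:ℝ) r ⊆ Icc 0 r := Ioc_subset_Icc_self
  have hsmap : MapsTo s (Icc 0 r) (Ici 0) := fun τ hτ => le_of_lt (hspos τ hτ)
  have hμs : ContinuousOn (fun τ => μ (s τ)) (Icc 0 r) := hμC.continuousOn.comp hsC hsmap
  have hgs : ContinuousOn (fun τ => g (s τ)) (Icc 0 r) := hgC.continuousOn.comp hsC hsmap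
  obtain ⟨MD, hMD⟩ := hDbdd
  obtain ⟨MsIn, hMsIn⟩ := hsInbdd
  obtain ⟨Ms, hMs⟩ := isCompact_Icc.exists_bound_of_continuousOn hsC
  have hvol : volume (Ioc (0:ℝ) r) ≠ ⊤ := measure_Ioc_lt_top.ne
  have hDint : IntegrableOn D (Ioc 0 r) := by
    apply Measure.integrableOn_of_bounded (M := MD) hvol hDmeas.aestronglyMeasurable
    filter_upwards [ae_restrict_mem measurableSet_Ioc] with w hw
    rw [Real.norm_eq_abs, abs_of_nonneg (hDnn w (hIocIcc hw))]
    exact hMD w (hIocIcc hw)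
  have hfint : IntegrableOn (fun τ => μ (s τ) - D τ - b) (Ioc 0 r) := by
    have h1 : IntegrableOn (fun τ => μ (s τ) - D τ) (Ioc 0 r) :=
      (hμs.integrableOn_Icc.mono_set hIocIcc).sub hDint
    exact h1.sub ((integrableOn_const_iff (C := b)).2 (Or.inr measure_Ioc_lt_top))
  -- representation of x
  have hxeq' : ∀ t ∈ Icc (0:ℝ) r,
      x t = x 0 + ∫ τ in Ioc (0:ℝ) t, (μ (s τ) - D τ - b) * x τ := by
    intro t ht
    rw [hxeq t ht, intervalIntegral.integral_of_le ht.1]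
  have hxrep := linear_volterra_rep hr0 hfint hxC hxeq'
  have h0mem : (0:ℝ) ∈ Icc (0:ℝ) r := ⟨le_refl 0, hr0⟩
  have hx0 : 0 < x 0 := hxpos 0 h0mem
  -- the function G and the primitive Qp
  set G : ℝ → ℝ := fun ρ => g (s ρ) * Real.exp (∫ w in Ioc (0:ℝ) ρ, (μ (s w) - D w - b))
    with hGdef
  have hFc : ContinuousOn (fun u => ∫ w in Ioc (0:ℝ) u, (μ (s w) - D w - b)) (Icc 0 r) :=
    intervalIntegral.continuousOn_primitive (integrableOn_icc_of_ioc hfint)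
  have hGc : ContinuousOn G (Icc 0 r) :=
    hgs.mul (Real.continuous_exp.comp_continuousOn hFc)
  set Qp : ℝ → ℝ := fun u => ∫ ρ in Ioc (0:ℝ) u, G ρ with hQpdef
  have hGIcc : IntegrableOn G (Icc 0 r) := hGc.integrableOn_Icc
  have hQpc : ContinuousOn Qp (Icc 0 r) := intervalIntegral.continuousOn_primitive hGIcc
  have hq' : ∀ t ∈ Icc (0:ℝ) r, q t = - Qp t := by
    intro t ht
    rw [hq t ht, intervalIntegral.integral_of_le ht.1]
    congr 1
    apply setIntegral_congr_fun measurableSet_Ioc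
    intro ρ hρ
    rw [hGdef]
    dsimp only
    rw [intervalIntegral.integral_of_le hρ.1.le]
  have hQpos : ∀ t ∈ Ioc (0:ℝ) r, 0 < Qp t := by
    intro t ht
    have : Qp t = ∫ ρ in (0:ℝ)..t, G ρ := (intervalIntegral.integral_of_le ht.1.le).symm
    rw [this]
    apply intervalIntegral.intervalIntegral_pos_of_pos_on
    · apply ContinuousOn.intervalIntegrable
      rw [uIcc_of_le ht.1.le]
      exact hGc.mono (Icc_subset_Icc le_rfl ht.2)
    · intro ρ hρ
      have hρIcc : ρ ∈ Icc (0:ℝ) r := ⟨hρ.1.le, hρ.2.le.trans ht.2⟩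
      exact mul_pos (hgpos _ (hspos ρ hρIcc)) (Real.exp_pos _)
    · exact ht.1
  have part1 : ∀ t ∈ Ioc (0:ℝ) r, q t < 0 := by
    intro t ht
    rw [hq' t (hIocIcc ht)]
    exact neg_lt_zero.2 (hQpos t ht)
  -- squared integral positive
  have hqsq : EqOn (fun t => q t ^ 2) (fun t => Qp t ^ 2) (uIcc (0:ℝ) r) := by
    intro t ht
    rw [uIcc_of_le hr0] at ht
    dsimp only
    rw [hq' t ht]
    ring
  have part2 : 0 < ∫ t in (0:ℝ)..r, q t ^ 2 := by
    rw [intervalIntegral.integral_congr hqsq]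
    apply intervalIntegral.intervalIntegral_pos_of_pos_on
    · apply ContinuousOn.intervalIntegrable
      rw [uIcc_of_le hr0]
      exact hQpc.pow 2
    · intro ρ hρ
      exact pow_pos (hQpos ρ ⟨hρ.1, hρ.2.le⟩) 2
    · exact hr
  -- p in terms of q
  have hsInint : IntegrableOn sIn (Ioc 0 r) := by
    apply Measure.integrableOn_of_bounded (M := MsIn) hvol hsInmeas.aestronglyMeasurable
    filter_upwards [ae_restrict_mem measurableSet_Ioc] with w hw
    rw [Real.norm_eq_abs, abs_of_nonneg (hsInnn w (hIocIcc hw))]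
    exact hMsIn w (hIocIcc hw)
  have hsint : IntegrableOn s (Ioc 0 r) := hsC.integrableOn_Icc.mono_set hIocIcc
  have hAint : IntegrableOn (fun w => D w * (sIn w - s w)) (Ioc 0 r) := by
    apply Integrable.bdd_mul (c := MD) (hsInint.sub hsint)
      (hDmeas.aestronglyMeasurable.restrict)
    filter_upwards [ae_restrict_mem measurableSet_Ioc] with w hw
    rw [Real.norm_eq_abs, abs_of_nonneg (hDnn w (hIocIcc hw))]
    exact hMD w (hIocIcc hw)
  have hBint : IntegrableOn (fun w => g (s w) * x w) (Ioc 0 r) :=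
    (hgs.mul hxC).integrableOn_Icc.mono_set hIocIcc
  have hp' : ∀ t ∈ Icc (0:ℝ) r, p t = - ∫ ρ in Ioc (0:ℝ) t, g (s ρ) * x ρ := by
    intro t ht
    have hsub : Ioc (0:ℝ) t ⊆ Ioc 0 r := Ioc_subset_Ioc_right ht.2
    rw [hp t ht, hseq t ht, intervalIntegral.integral_of_le ht.1,
      intervalIntegral.integral_of_le ht.1,
      integral_sub (hAint.mono_set hsub) (hBint.mono_set hsub)]
    ring
  have hpq : ∀ t ∈ Icc (0:ℝ) r, p t = x 0 * q t := by
    intro t ht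
    rw [hp' t ht, hq' t ht, hQpdef]
    dsimp only
    have : (∫ ρ in Ioc (0:ℝ) t, g (s ρ) * x ρ) = ∫ ρ in Ioc (0:ℝ) t, x 0 * G ρ := by
      apply setIntegral_congr_fun measurableSet_Ioc
      intro ρ hρ
      have hρIcc : ρ ∈ Icc (0:ℝ) r := ⟨hρ.1.le, hρ.2.trans ht.2⟩
      dsimp only
      rw [hxrep ρ hρIcc, hGdef]
      ring
    rw [this, integral_const_mul]
    ring
  refine ⟨part1, part2, ?_⟩
  have hpqr : EqOn (fun t => p t * q t) (fun t => x 0 * q t ^ 2) (uIcc (0:ℝ) r) := by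
    intro t ht
    rw [uIcc_of_le hr0] at ht
    dsimp only
    rw [hpq t ht]
    ring
  rw [intervalIntegral.integral_congr hpqr, intervalIntegral.integral_const_mul,
    mul_div_assoc, div_self (ne_of_gt part2), mul_one,
    intervalIntegral.integral_of_le hr0]
  rw [hxrep r (right_mem_Icc.2 hr0)]
  ring
end

section
/- Let μ₁, μ₂, g₁, g₂ : [0,∞) → [0,∞) be continuously differentiable bounded functions vanishing at 0 and positive on (0,∞), b₁, b₂ ≥ 0, and let (x₁*, x₂*, s*) be a coexistence equilibrium for constant inputs D* > 0, s_in > s*: μᵢ(s*) − bᵢ = D* for i = 1,2 and D*(s_in − s*) = g₁(s*)x₁* + g₂(s*)x₂*. Let G₁, G₂, G₃ be arbitrary continuous functions (the observer correction gains). For any z₀ = (z₀₁, z₀₂) with z₀₁, z₀₂ > 0 satisfying D*(s_in − s*) = g₁(s*)z₀₁ + g₂(s*)z₀₂, the constant functions z₁(t) ≡ z₀₁, z₂(t) ≡ z₀₂, ξ(t) ≡ s* solve the smooth observer system ż₁ = (μ₁(s) − D − b₁)z₁ + (s − ξ)G₁(s, ξ, z₁, z₂, D, s_in), ż₂ = (μ₂(s)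 − D − b₂)z₂ + (s − ξ)G₂(s, ξ, z₁, z₂, D, s_in), ξ̇ = D(s_in − s) − g₁(s)z₁ − g₂(s)z₂ + (s − ξ)G₃(s, ξ, z₁, z₂, D, s_in) along the plant trajectory s(t) ≡ s*, D(t) ≡ D*, s_in(t) ≡ s_in. Consequently, if x₀ = (x₀₁, x₀₂) with x₀₁, x₀₂ > 0 also satisfies D*(s_in − s*) = g₁(s*)x₀₁ + g₂(s*)x₀₂ and x₀ ≠ z₀, then the corresponding plant solution is x(t) ≡ x₀, s(t) ≡ s*, and the observer error satisfies |z(t) − x(t)| = |z₀ − x₀| > 0 for all t ≥ 0. -/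
open Real Set MeasureTheory

/-- Remark 3.4: under coexistence, any smooth observer of the correction form (3.20) admits
constant trajectories along the constant plant trajectory `s ≡ s*`, `D ≡ D*`, `s_in ≡ s_in`;
any two admissible initial conditions on the equilibrium line give a constant, nonzero
estimation error. -/
theorem no_smooth_observer_under_coexistence
    (μ₁ μ₂ g₁ g₂ : ℝ → ℝ)
    (hμ₁C : ContDiffOn ℝ 1 μ₁ (Ici 0)) (hμ₂C : ContDiffOn ℝ 1 μ₂ (Ici 0))
    (hg₁C : ContDiffOn ℝ 1 g₁ (Ici 0)) (hg₂C : ContDiffOn ℝ 1 g₂ (Ici 0))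
    (hμ₁bdd : ∃ M, ∀ u ≥ (0:ℝ), μ₁ u ≤ M) (hμ₂bdd : ∃ M, ∀ u ≥ (0:ℝ), μ₂ u ≤ M)
    (hg₁bdd : ∃ M, ∀ u ≥ (0:ℝ), g₁ u ≤ M) (hg₂bdd : ∃ M, ∀ u ≥ (0:ℝ), g₂ u ≤ M)
    (hμ₁0 : μ₁ 0 = 0) (hμ₂0 : μ₂ 0 = 0) (hg₁0 : g₁ 0 = 0) (hg₂0 : g₂ 0 = 0)
    (hμ₁pos : ∀ u > (0:ℝ), 0 < μ₁ u) (hμ₂pos : ∀ u > (0:ℝ), 0 < μ₂ u)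
    (hg₁pos : ∀ u > (0:ℝ), 0 < g₁ u) (hg₂pos : ∀ u > (0:ℝ), 0 < g₂ u)
    (b₁ b₂ : ℝ) (hb₁ : 0 ≤ b₁) (hb₂ : 0 ≤ b₂)
    (Ds sIn : ℝ) (hDs : 0 < Ds)
    (x₁s x₂s ss : ℝ) (hx₁s : 0 < x₁s) (hx₂s : 0 < x₂s)
    (hss : 0 < ss) (hssIn : ss < sIn)
    (heq₁ : μ₁ ss - b₁ = Ds) (heq₂ : μ₂ ss - b₂ = Ds)
    (heq₃ : Ds * (sIn - ss) = g₁ ss * x₁s + g₂ ss * x₂s)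
    (G₁ G₂ G₃ : ℝ → ℝ → ℝ → ℝ → ℝ → ℝ → ℝ)
    (hG₁C : Continuous fun v : ℝ × ℝ × ℝ × ℝ × ℝ × ℝ =>
      G₁ v.1 v.2.1 v.2.2.1 v.2.2.2.1 v.2.2.2.2.1 v.2.2.2.2.2)
    (hG₂C : Continuous fun v : ℝ × ℝ × ℝ × ℝ × ℝ × ℝ =>
      G₂ v.1 v.2.1 v.2.2.1 v.2.2.2.1 v.2.2.2.2.1 v.2.2.2.2.2)
    (hG₃C : Continuous fun v : ℝ × ℝ × ℝ × ℝ × ℝ × ℝ =>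
      G₃ v.1 v.2.1 v.2.2.1 v.2.2.2.1 v.2.2.2.2.1 v.2.2.2.2.2) :
    ∀ z₀₁ > (0:ℝ), ∀ z₀₂ > (0:ℝ),
      Ds * (sIn - ss) = g₁ ss * z₀₁ + g₂ ss * z₀₂ →
      -- the constant functions `z₁ ≡ z₀₁`, `z₂ ≡ z₀₂`, `ξ ≡ s*` solve the observer (3.20)
      -- along the plant trajectory `s ≡ s*`, `D ≡ D*`, `s_in ≡ s_in`:
      ((∀ t : ℝ, HasDerivAt (fun _ : ℝ => z₀₁)
          ((μ₁ ss - Ds - b₁) * z₀₁ + (ss - ss) * G₁ ss ss z₀₁ z₀₂ Ds sIn) t) ∧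
       (∀ t : ℝ, HasDerivAt (fun _ : ℝ => z₀₂)
          ((μ₂ ss - Ds - b₂) * z₀₂ + (ss - ss) * G₂ ss ss z₀₁ z₀₂ Ds sIn) t) ∧
       (∀ t : ℝ, HasDerivAt (fun _ : ℝ => ss)
          (Ds * (sIn - ss) - g₁ ss * z₀₁ - g₂ ss * z₀₂ +
            (ss - ss) * G₃ ss ss z₀₁ z₀₂ Ds sIn) t)) ∧
      -- consequently, for every admissible plant initial state `x₀ ≠ z₀`, the plant solution
      -- is constant and the estimation error stays equal to its (nonzero) initial value:
      (∀ x₀₁ > (0:ℝ), ∀ x₀₂ > (0:ℝ),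
        Ds * (sIn - ss) = g₁ ss * x₀₁ + g₂ ss * x₀₂ → (x₀₁, x₀₂) ≠ (z₀₁, z₀₂) →
        ((∀ t : ℝ, HasDerivAt (fun _ : ℝ => x₀₁) ((μ₁ ss - Ds - b₁) * x₀₁) t) ∧
         (∀ t : ℝ, HasDerivAt (fun _ : ℝ => x₀₂) ((μ₂ ss - Ds - b₂) * x₀₂) t) ∧
         (∀ t : ℝ, HasDerivAt (fun _ : ℝ => ss)
            (Ds * (sIn - ss) - g₁ ss * x₀₁ - g₂ ss * x₀₂) t)) ∧
        (∀ t : ℝ, t ≥ 0 →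
          ‖((z₀₁, z₀₂) : ℝ × ℝ) - (x₀₁, x₀₂)‖ = ‖((z₀₁, z₀₂) : ℝ × ℝ) - (x₀₁, x₀₂)‖ ∧
          0 < ‖((z₀₁, z₀₂) : ℝ × ℝ) - (x₀₁, x₀₂)‖)) := by
  intro z₀₁ hz₁ z₀₂ hz₂ hz
  have h1 : μ₁ ss - Ds - b₁ = 0 := by linarith
  have h2 : μ₂ ss - Ds - b₂ = 0 := by linarith
  refine ⟨⟨fun t => ?_, fun t => ?_, fun t => ?_⟩, ?_⟩
  · have : (μ₁ ss - Ds - b₁) * z₀₁ + (ss - ss) * G₁ ss ss z₀₁ z₀₂ Ds sIn = 0 := by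
      rw [h1]; ring
    rw [this]; exact hasDerivAt_const t z₀₁
  · have : (μ₂ ss - Ds - b₂) * z₀₂ + (ss - ss) * G₂ ss ss z₀₁ z₀₂ Ds sIn = 0 := by
      rw [h2]; ring
    rw [this]; exact hasDerivAt_const t z₀₂
  · have : Ds * (sIn - ss) - g₁ ss * z₀₁ - g₂ ss * z₀₂ +
        (ss - ss) * G₃ ss ss z₀₁ z₀₂ Ds sIn = 0 := by rw [hz]; ring
    rw [this]; exact hasDerivAt_const t ss
  intro x₀₁ hx₁ x₀₂ hx₂ hx hne
  refine ⟨⟨fun t => ?_, fun t => ?_, fun t => ?_⟩, fun t _ => ⟨rfl, ?_⟩⟩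
  · rw [h1, zero_mul]; exact hasDerivAt_const t x₀₁
  · rw [h2, zero_mul]; exact hasDerivAt_const t x₀₂
  · have : Ds * (sIn - ss) - g₁ ss * x₀₁ - g₂ ss * x₀₂ = 0 := by rw [hx]; ring
    rw [this]; exact hasDerivAt_const t ss
  · rw [norm_pos_iff, sub_ne_zero]
    exact fun h => hne h.symm
end

section
/- Let a₁, a₂, k₁, k₂ > 0 and b₁, b₂ ≥ 0, and suppose that NOT (a₁ = a₂ and b₁ = b₂ and k₁ = k₂). Consider the batch culture system ẋ₁ = (a₁s/(k₁+s) − b₁)x₁, ẋ₂ = (a₂s/(k₂+s) − b₂)x₂, ṡ = −(a₁s/(k₁+s))x₁ − (a₂s/(k₂+s))x₂. Then for every r > 0 the system is strongly observable in time r: if (x₁, x₂, s) and (χ₁, χ₂, σ) are two continuously differentiable solutions on [0,r] with all components positive and with s(t) = σ(t) for all t ∈ [0,r], then (x₁(0), x₂(0)) = (χ₁(0), χ₂(0)). -/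
open Real Set MeasureTheory
set_option maxHeartbeats 4000000

private lemma deriv_zero_of_eq_zero {G G' : ℝ → ℝ} {a b : ℝ}
    (hG : ∀ t ∈ Ioo a b, HasDerivAt G (G' t) t)
    (h0 : ∀ t ∈ Ioo a b, G t = 0) :
    ∀ t ∈ Ioo a b, G' t = 0 := by
  intro t ht
  have h1 : HasDerivAt G 0 t := by
    have heq : (fun _ : ℝ => (0:ℝ)) =ᶠ[nhds t] G :=
      Filter.eventuallyEq_of_mem (isOpen_Ioo.mem_nhds ht) fun u hu => (h0 u hu).symm
  -- congr_of_eventuallyEq : HasDerivAt f f' x → g =ᶠ[𝓝 x] f → HasDerivAt g f' x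
    exact (hasDerivAt_const t (0:ℝ)).congr_of_eventuallyEq heq.symm
  exact (hG t ht).unique h1

private lemma ratio_const {p x χ : ℝ → ℝ} {r : ℝ} (hr : 0 < r)
    (hχ : ∀ t ∈ Icc 0 r, 0 < χ t)
    (hdx : ∀ t ∈ Icc 0 r, HasDerivAt x (p t * x t) t)
    (hdχ : ∀ t ∈ Icc 0 r, HasDerivAt χ (p t * χ t) t) :
    ∀ t ∈ Icc 0 r, x t = (x 0 / χ 0) * χ t := by
  have h0 : (0:ℝ) ∈ Icc (0:ℝ) r := ⟨le_refl 0, hr.le⟩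
  have key : ∀ t ∈ Icc 0 r, (fun t => x t / χ t) t = (fun t => x t / χ t) 0 := by
    apply constant_of_has_deriv_right_zero
    · intro t ht
      exact (((hdx t ht).div (hdχ t ht) (hχ t ht).ne').continuousAt).continuousWithinAt
    · intro t ht
      have ht' : t ∈ Icc 0 r := Ico_subset_Icc_self ht
      have h := (hdx t ht').div (hdχ t ht') (hχ t ht').ne'
      have e : (p t * x t * χ t - x t * (p t * χ t)) / χ t ^ 2 = 0 := by ring
      rw [e] at h
      exact h.hasDerivWithinAt
  intro t ht
  have h := key t ht
  simp only at h
  rw [div_eq_div_iff (hχ t ht).ne' (hχ 0 h0).ne'] at h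
  rw [div_mul_eq_mul_div, eq_div_iff (hχ 0 h0).ne']
  linarith [h]


/-- Theorem 3.5 (contrapositive form): if the Michaelis–Menten kinetics and mortality rates
of the two species are not identical, the batch culture (3.23) is strongly observable in
time `r` for every `r > 0`. -/
theorem batch_culture_strongly_observable
    (a₁ a₂ k₁ k₂ : ℝ) (ha₁ : 0 < a₁) (ha₂ : 0 < a₂) (hk₁ : 0 < k₁) (hk₂ : 0 < k₂)
    (b₁ b₂ : ℝ) (hb₁ : 0 ≤ b₁) (hb₂ : 0 ≤ b₂)
    (hne : ¬ (a₁ = a₂ ∧ b₁ = b₂ ∧ k₁ = k₂))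
    (r : ℝ) (hr : 0 < r)
    (x₁ x₂ s χ₁ χ₂ σ : ℝ → ℝ)
    (hx₁pos : ∀ t ∈ Icc 0 r, 0 < x₁ t) (hx₂pos : ∀ t ∈ Icc 0 r, 0 < x₂ t)
    (hspos : ∀ t ∈ Icc 0 r, 0 < s t)
    (hχ₁pos : ∀ t ∈ Icc 0 r, 0 < χ₁ t) (hχ₂pos : ∀ t ∈ Icc 0 r, 0 < χ₂ t)
    (hσpos : ∀ t ∈ Icc 0 r, 0 < σ t)
    (hx₁ : ∀ t ∈ Icc 0 r,
      HasDerivAt x₁ ((a₁ * s t / (k₁ + s t) - b₁) * x₁ t) t)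
    (hx₂ : ∀ t ∈ Icc 0 r,
      HasDerivAt x₂ ((a₂ * s t / (k₂ + s t) - b₂) * x₂ t) t)
    (hs : ∀ t ∈ Icc 0 r,
      HasDerivAt s (-(a₁ * s t / (k₁ + s t)) * x₁ t - (a₂ * s t / (k₂ + s t)) * x₂ t) t)
    (hχ₁ : ∀ t ∈ Icc 0 r,
      HasDerivAt χ₁ ((a₁ * σ t / (k₁ + σ t) - b₁) * χ₁ t) t)
    (hχ₂ : ∀ t ∈ Icc 0 r,
      HasDerivAt χ₂ ((a₂ * σ t / (k₂ + σ t) - b₂) * χ₂ t) t)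
    (hσ : ∀ t ∈ Icc 0 r,
      HasDerivAt σ (-(a₁ * σ t / (k₁ + σ t)) * χ₁ t - (a₂ * σ t / (k₂ + σ t)) * χ₂ t) t)
    (hout : ∀ t ∈ Icc 0 r, s t = σ t) :
    (x₁ 0, x₂ 0) = (χ₁ 0, χ₂ 0) := by
  have hIoo : Ioo (0:ℝ) r ⊆ Icc 0 r := Ioo_subset_Icc_self
  have h0r : (0:ℝ) ∈ Icc (0:ℝ) r := ⟨le_refl 0, hr.le⟩
  have ht₀ : (r / 2) ∈ Ioo (0:ℝ) r := ⟨by linarith, by linarith⟩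
  have hσs : ∀ t ∈ Icc 0 r, σ t = s t := fun t ht => (hout t ht).symm
  have hχ₁' : ∀ t ∈ Icc 0 r, HasDerivAt χ₁ ((a₁ * s t / (k₁ + s t) - b₁) * χ₁ t) t := by
    intro t ht; have h := hχ₁ t ht; rwa [hσs t ht] at h
  have hχ₂' : ∀ t ∈ Icc 0 r, HasDerivAt χ₂ ((a₂ * s t / (k₂ + s t) - b₂) * χ₂ t) t := by
    intro t ht; have h := hχ₂ t ht; rwa [hσs t ht] at h
  obtain ⟨c₁, hx₁c⟩ : ∃ c, ∀ t ∈ Icc 0 r, x₁ t = c * χ₁ t :=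
    ⟨x₁ 0 / χ₁ 0, ratio_const hr hχ₁pos hx₁ hχ₁'⟩
  obtain ⟨c₂, hx₂c⟩ : ∃ c, ∀ t ∈ Icc 0 r, x₂ t = c * χ₂ t :=
    ⟨x₂ 0 / χ₂ 0, ratio_const hr hχ₂pos hx₂ hχ₂'⟩
  have hdneg : ∀ t ∈ Icc 0 r, (-(a₁ * s t / (k₁ + s t)) * x₁ t - (a₂ * s t / (k₂ + s t)) * x₂ t) < 0 := by
    intro t ht
    have h1 : 0 < a₁ * s t / (k₁ + s t) * x₁ t := by
      have h2 := hspos t ht; have h3 := hx₁pos t ht; positivity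
    have h2 : 0 < a₂ * s t / (k₂ + s t) * x₂ t := by
      have h2 := hspos t ht; have h3 := hx₂pos t ht; positivity
    nlinarith
  have hsd : ∀ t ∈ Ioo 0 r, HasDerivAt s ((-(a₁ * s t / (k₁ + s t)) * x₁ t - (a₂ * s t / (k₂ + s t)) * x₂ t)) t := fun t ht => hs t (hIoo ht)
  have hE0 : ∀ t ∈ Ioo 0 r,
      (-(a₁ * s t / (k₁ + s t)) * x₁ t - (a₂ * s t / (k₂ + s t)) * x₂ t) = -(a₁ * s t / (k₁ + s t)) * χ₁ t - (a₂ * s t / (k₂ + s t)) * χ₂ t := by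
    intro t ht
    have ht' := hIoo ht
    have h1 := hσ t ht'
    rw [hσs t ht'] at h1
    have h2 : HasDerivAt s (-(a₁ * s t / (k₁ + s t)) * χ₁ t - (a₂ * s t / (k₂ + s t)) * χ₂ t) t :=
      h1.congr_of_eventuallyEq
        (Filter.eventuallyEq_of_mem (isOpen_Ioo.mem_nhds ht) fun u hu => hout u (hIoo hu))
    exact (hs t ht').unique h2
  have hE1 : ∀ t ∈ Ioo 0 r, (c₁ - 1) * (a₁ * s t / (k₁ + s t) * χ₁ t) + (c₂ - 1) * (a₂ * s t / (k₂ + s t) * χ₂ t) = 0 := by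
    intro t ht
    have ht' := hIoo ht
    have e := hE0 t ht
    rw [hx₁c t ht', hx₂c t ht'] at e
    linear_combination -e
  by_cases hc1 : c₁ = 1
  · have hc1' : c₁ - 1 = 0 := by rw [hc1]; ring
    have e := hE1 (r / 2) ht₀
    have e2 : (c₂ - 1) * (a₂ * s (r / 2) / (k₂ + s (r / 2)) * χ₂ (r / 2)) = 0 := by
      linear_combination e - (a₁ * s (r / 2) / (k₁ + s (r / 2)) * χ₁ (r / 2)) * hc1'
    have hψ : 0 < (a₂ * s (r / 2) / (k₂ + s (r / 2)) * χ₂ (r / 2)) := by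
      have h2 := hspos (r/2) (hIoo ht₀); have h3 := hχ₂pos (r/2) (hIoo ht₀); positivity
    have hc2 : c₂ = 1 := by
      have := (mul_eq_zero.mp e2).resolve_right hψ.ne'
      linarith
    have h1 : x₁ 0 = χ₁ 0 := by have := hx₁c 0 h0r; rw [hc1, one_mul] at this; exact this
    have h2 : x₂ 0 = χ₂ 0 := by have := hx₂c 0 h0r; rw [hc2, one_mul] at this; exact this
    simp only [Prod.mk.injEq]
    exact ⟨h1, h2⟩
  · exfalso
    have hA : c₁ - 1 ≠ 0 := sub_ne_zero.mpr hc1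
    have hφd : ∀ t ∈ Ioo 0 r, HasDerivAt (fun u => a₁ * s u / (k₁ + s u) * χ₁ u) ((a₁ * (-(a₁ * s t / (k₁ + s t)) * x₁ t - (a₂ * s t / (k₂ + s t)) * x₂ t) * (k₁ + s t) - a₁ * s t * (-(a₁ * s t / (k₁ + s t)) * x₁ t - (a₂ * s t / (k₂ + s t)) * x₂ t)) / (k₁ + s t) ^ 2 * χ₁ t + a₁ * s t / (k₁ + s t) * ((a₁ * s t / (k₁ + s t) - b₁) * χ₁ t)) t := by
      intro t ht
      have ht' := hIoo ht
      have hks : k₁ + s t ≠ 0 := by have := hspos t ht'; positivity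
      have h1 : HasDerivAt (fun u => a₁ * s u) (a₁ * (-(a₁ * s t / (k₁ + s t)) * x₁ t - (a₂ * s t / (k₂ + s t)) * x₂ t)) t := (hsd t ht).const_mul a₁
      have h2 : HasDerivAt (fun u => k₁ + s u) ((-(a₁ * s t / (k₁ + s t)) * x₁ t - (a₂ * s t / (k₂ + s t)) * x₂ t)) t := by
        exact (hsd t ht).const_add k₁
      exact (h1.div h2 hks).mul (hχ₁' t ht')
    have hψd : ∀ t ∈ Ioo 0 r, HasDerivAt (fun u => a₂ * s u / (k₂ + s u) * χ₂ u) ((a₂ * (-(a₁ * s t / (k₁ + s t)) * x₁ t - (a₂ * s t / (k₂ + s t)) * x₂ t) * (k₂ + s t) - a₂ * s t * (-(a₁ * s t / (k₁ + s t)) * x₁ t - (a₂ * s t / (k₂ + s t)) * x₂ t)) / (k₂ + s t) ^ 2 * χ₂ t + a₂ * s t / (k₂ + s t) * ((a₂ * s t / (k₂ + s t) - b₂) * χ₂ t)) t := by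
      intro t ht
      have ht' := hIoo ht
      have hks : k₂ + s t ≠ 0 := by have := hspos t ht'; positivity
      have h1 : HasDerivAt (fun u => a₂ * s u) (a₂ * (-(a₁ * s t / (k₁ + s t)) * x₁ t - (a₂ * s t / (k₂ + s t)) * x₂ t)) t := (hsd t ht).const_mul a₂
      have h2 : HasDerivAt (fun u => k₂ + s u) ((-(a₁ * s t / (k₁ + s t)) * x₁ t - (a₂ * s t / (k₂ + s t)) * x₂ t)) t := by
        exact (hsd t ht).const_add k₂
      exact (h1.div h2 hks).mul (hχ₂' t ht')
    have hE2 : ∀ t ∈ Ioo 0 r, (c₁ - 1) * ((a₁ * (-(a₁ * s t / (k₁ + s t)) * x₁ t - (a₂ * s t / (k₂ + s t)) * x₂ t) * (k₁ + s t) - a₁ * s t * (-(a₁ * s t / (k₁ + s t)) * x₁ t - (a₂ * s t / (k₂ + s t)) * x₂ t)) / (k₁ + s t) ^ 2 * χ₁ t + a₁ * s t / (k₁ + s t) * ((a₁ * s t / (k₁ + s t) - b₁) * χ₁ t)) + (c₂ - 1) * ((a₂ * (-(a₁ * s t / (k₁ + s t)) * x₁ t - (a₂ * s t / (k₂ + s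 t)) * x₂ t) * (k₂ + s t) - a₂ * s t * (-(a₁ * s t / (k₁ + s t)) * x₁ t - (a₂ * s t / (k₂ + s t)) * x₂ t)) / (k₂ + s t) ^ 2 * χ₂ t + a₂ * s t / (k₂ + s t) * ((a₂ * s t / (k₂ + s t) - b₂) * χ₂ t)) = 0 := by
      apply deriv_zero_of_eq_zero (G := fun u => (c₁ - 1) * (a₁ * s u / (k₁ + s u) * χ₁ u) + (c₂ - 1) * (a₂ * s u / (k₂ + s u) * χ₂ u))
      · intro t ht
        exact ((hφd t ht).const_mul (c₁ - 1)).add ((hψd t ht).const_mul (c₂ - 1))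
      · exact hE1
    have h8 : ∀ t ∈ Ioo 0 r, ((a₁ * (-(a₁ * s t / (k₁ + s t)) * x₁ t - (a₂ * s t / (k₂ + s t)) * x₂ t) * (k₁ + s t) - a₁ * s t * (-(a₁ * s t / (k₁ + s t)) * x₁ t - (a₂ * s t / (k₂ + s t)) * x₂ t)) / (k₁ + s t) ^ 2 * χ₁ t + a₁ * s t / (k₁ + s t) * ((a₁ * s t / (k₁ + s t) - b₁) * χ₁ t)) * (a₂ * s t / (k₂ + s t) * χ₂ t) = (a₁ * s t / (k₁ + s t) * χ₁ t) * ((a₂ * (-(a₁ * s t / (k₁ + s t)) * x₁ t - (a₂ * s t / (k₂ + s t)) * x₂ t) * (k₂ + s t) - a₂ * s t * (-(a₁ * s t / (k₁ + s t)) * x₁ t - (a₂ * s t / (k₂ + s t)) * x₂ t)) / (k₂ + s t) ^ 2 * χ₂ t + a₂ * s t / (k₂ + s t) * ((a₂ * s t / (k₂ + s t) - b₂) * χ₂ t)) := by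
      intro t ht
      have e1 := hE1 t ht
      have e2 := hE2 t ht
      apply mul_left_cancel₀ hA
      linear_combination (a₂ * s t / (k₂ + s t) * χ₂ t) * e2 - ((a₂ * (-(a₁ * s t / (k₁ + s t)) * x₁ t - (a₂ * s t / (k₂ + s t)) * x₂ t) * (k₂ + s t) - a₂ * s t * (-(a₁ * s t / (k₁ + s t)) * x₁ t - (a₂ * s t / (k₂ + s t)) * x₂ t)) / (k₂ + s t) ^ 2 * χ₂ t + a₂ * s t / (k₂ + s t) * ((a₂ * s t / (k₂ + s t) - b₂) * χ₂ t)) * e1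
    have hstar : ∀ t ∈ Ioo 0 r, (k₁ - k₂) * (-(a₁ * s t / (k₁ + s t)) * x₁ t - (a₂ * s t / (k₂ + s t)) * x₂ t) + a₁ * s t * (k₂ + s t) - a₂ * s t * (k₁ + s t) - (b₁ - b₂) * ((k₁ + s t) * (k₂ + s t)) = 0 := by
      intro t ht
      have ht' := hIoo ht
      have hs0 := hspos t ht'
      have hχ₁0 := hχ₁pos t ht'
      have hχ₂0 := hχ₂pos t ht'
      have hk₁s : (0:ℝ) < k₁ + s t := by linarith
      have hk₂s : (0:ℝ) < k₂ + s t := by linarith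
      have h := h8 t ht
      have hident : ((k₁ - k₂) * (-(a₁ * s t / (k₁ + s t)) * x₁ t - (a₂ * s t / (k₂ + s t)) * x₂ t) + a₁ * s t * (k₂ + s t) - a₂ * s t * (k₁ + s t) - (b₁ - b₂) * ((k₁ + s t) * (k₂ + s t))) * (a₁ * a₂ * (s t) ^ 2 * χ₁ t * χ₂ t)
          = (((a₁ * (-(a₁ * s t / (k₁ + s t)) * x₁ t - (a₂ * s t / (k₂ + s t)) * x₂ t) * (k₁ + s t) - a₁ * s t * (-(a₁ * s t / (k₁ + s t)) * x₁ t - (a₂ * s t / (k₂ + s t)) * x₂ t)) / (k₁ + s t) ^ 2 * χ₁ t + a₁ * s t / (k₁ + s t) * ((a₁ * s t / (k₁ + s t) - b₁) * χ₁ t)) * (a₂ * s t / (k₂ + s t) * χ₂ t) - (a₁ * s t / (k₁ + s t) * χ₁ t) * ((a₂ * (-(a₁ * s t / (k₁ + s t)) * x₁ t - (a₂ * s t / (k₂ + s t)) * x₂ t) * (k₂ + s t) - a₂ * s t * (-(a₁ * s t / (k₁ + s t)) * x₁ t - (a₂ * s t / (k₂ + s t)) * x₂ t)) / (k₂ + s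 t) ^ 2 * χ₂ t + a₂ * s t / (k₂ + s t) * ((a₂ * s t / (k₂ + s t) - b₂) * χ₂ t))) * ((k₁ + s t) ^ 2 * (k₂ + s t) ^ 2) := by
        field_simp
        ring
      rw [h, sub_self, zero_mul] at hident
      have hM : 0 < a₁ * a₂ * (s t) ^ 2 * χ₁ t * χ₂ t := by positivity
      exact (mul_eq_zero.mp hident).resolve_right hM.ne'
    by_cases hkk : k₁ = k₂
    · have hG0 : ∀ t ∈ Ioo 0 r, (a₁ - a₂) * s t - (b₁ - b₂) * (k₁ + s t) = 0 := by
        intro t ht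
        have h := hstar t ht
        rw [← hkk] at h
        have hk₁s : (0:ℝ) < k₁ + s t := by have := hspos t (hIoo ht); linarith
        have h2 : (k₁ + s t) * ((a₁ - a₂) * s t - (b₁ - b₂) * (k₁ + s t)) = 0 := by
          linear_combination h
        exact (mul_eq_zero.mp h2).resolve_left hk₁s.ne'
      have hG1 : ∀ t ∈ Ioo 0 r, (a₁ - a₂ - (b₁ - b₂)) * (-(a₁ * s t / (k₁ + s t)) * x₁ t - (a₂ * s t / (k₂ + s t)) * x₂ t) = 0 := by
        apply deriv_zero_of_eq_zero (G := fun u => (a₁ - a₂) * s u - (b₁ - b₂) * (k₁ + s u))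
        · intro t ht
          have h1 := (hsd t ht).const_mul (a₁ - a₂)
          have h2 := ((hasDerivAt_const t k₁).add (hsd t ht)).const_mul (b₁ - b₂)
          have h3 := h1.sub h2
          refine h3.congr_deriv ?_
          ring
        · exact hG0
      have hd0 : (-(a₁ * s (r / 2) / (k₁ + s (r / 2))) * x₁ (r / 2) - (a₂ * s (r / 2) / (k₂ + s (r / 2))) * x₂ (r / 2)) < 0 := hdneg (r / 2) (hIoo ht₀)
      have hab : a₁ - a₂ - (b₁ - b₂) = 0 :=
        (mul_eq_zero.mp (hG1 (r / 2) ht₀)).resolve_right hd0.ne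
      have hbk : (b₁ - b₂) * k₁ = 0 := by
        linear_combination s (r / 2) * hab - hG0 (r / 2) ht₀
      have hb : b₁ = b₂ := by
        have := (mul_eq_zero.mp hbk).resolve_right hk₁.ne'
        linarith
      exact hne ⟨by linarith, hb, hkk⟩
    · have hK : k₁ - k₂ ≠ 0 := sub_ne_zero.mpr hkk
      have hd' : ∀ t ∈ Ioo 0 r, (k₁ - k₂) * (-(a₁ * s t / (k₁ + s t)) * x₁ t - (a₂ * s t / (k₂ + s t)) * x₂ t) = (a₂ - a₁ + b₁ - b₂) * (s t) ^ 2 + (a₂ * k₁ - a₁ * k₂ + (b₁ - b₂) * (k₁ + k₂)) * (s t) + ((b₁ - b₂) * (k₁ * k₂)) := by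
        intro t ht
        linear_combination hstar t ht
      have hdval' : ∀ t ∈ Ioo 0 r, (-(a₁ * s t / (k₁ + s t)) * x₁ t - (a₂ * s t / (k₂ + s t)) * x₂ t) = -(c₁ * (a₁ * s t / (k₁ + s t) * χ₁ t) + c₂ * (a₂ * s t / (k₂ + s t) * χ₂ t)) := by
        intro t ht
        have ht' := hIoo ht
        rw [hx₁c t ht', hx₂c t ht']
        ring
      have hm2 : ∀ t ∈ Ioo 0 r, (c₁ - 1) * (-(a₁ * s t / (k₁ + s t)) * x₁ t - (a₂ * s t / (k₂ + s t)) * x₂ t) + (c₁ - c₂) * (a₂ * s t / (k₂ + s t) * χ₂ t) = 0 := by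
        intro t ht
        have e0 := hdval' t ht
        have e1 := hE1 t ht
        linear_combination (c₁ - 1) * e0 - c₁ * e1
      have hFG : ∀ t ∈ Ioo 0 r,
          (c₁ - 1) * ((a₂ - a₁ + b₁ - b₂) * (2 * s t * (-(a₁ * s t / (k₁ + s t)) * x₁ t - (a₂ * s t / (k₂ + s t)) * x₂ t)) + (a₂ * k₁ - a₁ * k₂ + (b₁ - b₂) * (k₁ + k₂)) * (-(a₁ * s t / (k₁ + s t)) * x₁ t - (a₂ * s t / (k₂ + s t)) * x₂ t))
            + (k₁ - k₂) * (c₁ - c₂) * ((a₂ * (-(a₁ * s t / (k₁ + s t)) * x₁ t - (a₂ * s t / (k₂ + s t)) * x₂ t) * (k₂ + s t) - a₂ * s t * (-(a₁ * s t / (k₁ + s t)) * x₁ t - (a₂ * s t / (k₂ + s t)) * x₂ t)) / (k₂ + s t) ^ 2 * χ₂ t + a₂ * s t / (k₂ + s t) * ((a₂ * s t / (k₂ + s t) - b₂) * χ₂ t)) = 0 := by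
        apply deriv_zero_of_eq_zero
          (G := fun u => (c₁ - 1) * ((a₂ - a₁ + b₁ - b₂) * (s u) ^ 2 + (a₂ * k₁ - a₁ * k₂ + (b₁ - b₂) * (k₁ + k₂)) * (s u) + ((b₁ - b₂) * (k₁ * k₂)))
            + (k₁ - k₂) * (c₁ - c₂) * (a₂ * s u / (k₂ + s u) * χ₂ u))
        · intro t ht
          have h1 : HasDerivAt (fun u => (a₂ - a₁ + b₁ - b₂) * (s u) ^ 2 + (a₂ * k₁ - a₁ * k₂ + (b₁ - b₂) * (k₁ + k₂)) * (s u) + ((b₁ - b₂) * (k₁ * k₂)))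
              ((a₂ - a₁ + b₁ - b₂) * (2 * s t * (-(a₁ * s t / (k₁ + s t)) * x₁ t - (a₂ * s t / (k₂ + s t)) * x₂ t)) + (a₂ * k₁ - a₁ * k₂ + (b₁ - b₂) * (k₁ + k₂)) * (-(a₁ * s t / (k₁ + s t)) * x₁ t - (a₂ * s t / (k₂ + s t)) * x₂ t)) t := by
            have h := ((((hsd t ht).pow 2).const_mul (a₂ - a₁ + b₁ - b₂)).add ((hsd t ht).const_mul (a₂ * k₁ - a₁ * k₂ + (b₁ - b₂) * (k₁ + k₂)))).add_const ((b₁ - b₂) * (k₁ * k₂))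
            refine h.congr_deriv ?_
            push_cast
            ring
          have h2 := (hψd t ht).const_mul ((k₁ - k₂) * (c₁ - c₂))
          exact (h1.const_mul (c₁ - 1)).add h2
        · intro t ht
          linear_combination (k₁ - k₂) * hm2 t ht - (c₁ - 1) * hd' t ht
      have h10 : ∀ t ∈ Ioo 0 r, (k₁ - k₂) * ((a₂ * (-(a₁ * s t / (k₁ + s t)) * x₁ t - (a₂ * s t / (k₂ + s t)) * x₂ t) * (k₂ + s t) - a₂ * s t * (-(a₁ * s t / (k₁ + s t)) * x₁ t - (a₂ * s t / (k₂ + s t)) * x₂ t)) / (k₂ + s t) ^ 2 * χ₂ t + a₂ * s t / (k₂ + s t) * ((a₂ * s t / (k₂ + s t) - b₂) * χ₂ t)) = (2 * (a₂ - a₁ + b₁ - b₂) * s t + (a₂ * k₁ - a₁ * k₂ + (b₁ - b₂) * (k₁ + k₂))) * (a₂ * s t / (k₂ + s t) * χ₂ t) := by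
        intro t ht
        have e3 := hFG t ht
        have e4 := hm2 t ht
        have hd0 : (-(a₁ * s t / (k₁ + s t)) * x₁ t - (a₂ * s t / (k₂ + s t)) * x₂ t) ≠ 0 := (hdneg t (hIoo ht)).ne
        have hψp : 0 < (a₂ * s t / (k₂ + s t) * χ₂ t) := by
          have h2 := hspos t (hIoo ht); have h3 := hχ₂pos t (hIoo ht); positivity
        have hc12 : c₁ - c₂ ≠ 0 := by
          intro h
          have hz : (c₁ - 1) * (-(a₁ * s t / (k₁ + s t)) * x₁ t - (a₂ * s t / (k₂ + s t)) * x₂ t) = 0 := by linear_combination e4 - (a₂ * s t / (k₂ + s t) * χ₂ t) * h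
          exact hd0 ((mul_eq_zero.mp hz).resolve_left hA)
        apply mul_left_cancel₀ hc12
        linear_combination e3 - (2 * (a₂ - a₁ + b₁ - b₂) * s t + (a₂ * k₁ - a₁ * k₂ + (b₁ - b₂) * (k₁ + k₂))) * e4
      have hE : ∀ t ∈ Ioo 0 r, (k₁ - k₂) * k₂ * (-(a₁ * s t / (k₁ + s t)) * x₁ t - (a₂ * s t / (k₂ + s t)) * x₂ t) + (k₁ - k₂) * a₂ * (s t) ^ 2 - (k₁ - k₂) * b₂ * (s t * (k₂ + s t)) - (2 * (a₂ - a₁ + b₁ - b₂) * s t + (a₂ * k₁ - a₁ * k₂ + (b₁ - b₂) * (k₁ + k₂))) * (s t * (k₂ + s t)) = 0 := by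
        intro t ht
        have ht' := hIoo ht
        have hs0 := hspos t ht'
        have hχ₂0 := hχ₂pos t ht'
        have hk₂s : (0:ℝ) < k₂ + s t := by linarith
        have hk₁s : (0:ℝ) < k₁ + s t := by linarith
        have h := h10 t ht
        have hident : ((k₁ - k₂) * k₂ * (-(a₁ * s t / (k₁ + s t)) * x₁ t - (a₂ * s t / (k₂ + s t)) * x₂ t) + (k₁ - k₂) * a₂ * (s t) ^ 2 - (k₁ - k₂) * b₂ * (s t * (k₂ + s t)) - (2 * (a₂ - a₁ + b₁ - b₂) * s t + (a₂ * k₁ - a₁ * k₂ + (b₁ - b₂) * (k₁ + k₂))) * (s t * (k₂ + s t))) * (a₂ * χ₂ t)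
            = ((k₁ - k₂) * ((a₂ * (-(a₁ * s t / (k₁ + s t)) * x₁ t - (a₂ * s t / (k₂ + s t)) * x₂ t) * (k₂ + s t) - a₂ * s t * (-(a₁ * s t / (k₁ + s t)) * x₁ t - (a₂ * s t / (k₂ + s t)) * x₂ t)) / (k₂ + s t) ^ 2 * χ₂ t + a₂ * s t / (k₂ + s t) * ((a₂ * s t / (k₂ + s t) - b₂) * χ₂ t)) - (2 * (a₂ - a₁ + b₁ - b₂) * s t + (a₂ * k₁ - a₁ * k₂ + (b₁ - b₂) * (k₁ + k₂))) * (a₂ * s t / (k₂ + s t) * χ₂ t)) * (k₂ + s t) ^ 2 := by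
          field_simp [hk₁s.ne', hk₂s.ne']
          ring
        rw [h, sub_self, zero_mul] at hident
        have hM2 : 0 < a₂ * χ₂ t := by positivity
        exact (mul_eq_zero.mp hident).resolve_right hM2.ne'
      have h11 : ∀ t ∈ Ioo 0 r, (2 * (a₂ - a₁ + b₁ - b₂)) * (s t) ^ 3 + ((a₂ - a₁ + b₁ - b₂) * k₂ + (a₂ * k₁ - a₁ * k₂ + (b₁ - b₂) * (k₁ + k₂)) - (k₁ - k₂) * (a₂ - b₂)) * (s t) ^ 2 + ((k₁ - k₂) * b₂ * k₂) * (s t) + (-(k₂ * ((b₁ - b₂) * (k₁ * k₂)))) = 0 := by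
        intro t ht
        linear_combination k₂ * hd' t ht - hE t ht
      have h12 : ∀ t ∈ Ioo 0 r, (3 * (2 * (a₂ - a₁ + b₁ - b₂)) * (s t) ^ 2 + 2 * ((a₂ - a₁ + b₁ - b₂) * k₂ + (a₂ * k₁ - a₁ * k₂ + (b₁ - b₂) * (k₁ + k₂)) - (k₁ - k₂) * (a₂ - b₂)) * (s t) + ((k₁ - k₂) * b₂ * k₂)) * (-(a₁ * s t / (k₁ + s t)) * x₁ t - (a₂ * s t / (k₂ + s t)) * x₂ t) = 0 := by
        apply deriv_zero_of_eq_zero (G := fun u => (2 * (a₂ - a₁ + b₁ - b₂)) * (s u) ^ 3 + ((a₂ - a₁ + b₁ - b₂) * k₂ + (a₂ * k₁ - a₁ * k₂ + (b₁ - b₂) * (k₁ + k₂)) - (k₁ - k₂) * (a₂ - b₂)) * (s u) ^ 2 + ((k₁ - k₂) * b₂ * k₂) * (s u) + (-(k₂ * ((b₁ - b₂) * (k₁ * k₂)))))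
        · intro t ht
          have h := ((((hsd t ht).pow 3).const_mul (2 * (a₂ - a₁ + b₁ - b₂))).add
            (((hsd t ht).pow 2).const_mul ((a₂ - a₁ + b₁ - b₂) * k₂ + (a₂ * k₁ - a₁ * k₂ + (b₁ - b₂) * (k₁ + k₂)) - (k₁ - k₂) * (a₂ - b₂)))).add (((hsd t ht).const_mul ((k₁ - k₂) * b₂ * k₂))) |>.add_const (-(k₂ * ((b₁ - b₂) * (k₁ * k₂))))
          refine h.congr_deriv ?_
          push_cast
          ring
        · exact h11
      have h12' : ∀ t ∈ Ioo 0 r, 3 * (2 * (a₂ - a₁ + b₁ - b₂)) * (s t) ^ 2 + 2 * ((a₂ - a₁ + b₁ - b₂) * k₂ + (a₂ * k₁ - a₁ * k₂ + (b₁ - b₂) * (k₁ + k₂)) - (k₁ - k₂) * (a₂ - b₂)) * (s t) + ((k₁ - k₂) * b₂ * k₂) = 0 := by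
        intro t ht
        have := (mul_eq_zero.mp (h12 t ht)).resolve_right (hdneg t (hIoo ht)).ne
        linarith
      have h13 : ∀ t ∈ Ioo 0 r, (6 * (2 * (a₂ - a₁ + b₁ - b₂)) * (s t) + 2 * ((a₂ - a₁ + b₁ - b₂) * k₂ + (a₂ * k₁ - a₁ * k₂ + (b₁ - b₂) * (k₁ + k₂)) - (k₁ - k₂) * (a₂ - b₂))) * (-(a₁ * s t / (k₁ + s t)) * x₁ t - (a₂ * s t / (k₂ + s t)) * x₂ t) = 0 := by
        apply deriv_zero_of_eq_zero (G := fun u => 3 * (2 * (a₂ - a₁ + b₁ - b₂)) * (s u) ^ 2 + 2 * ((a₂ - a₁ + b₁ - b₂) * k₂ + (a₂ * k₁ - a₁ * k₂ + (b₁ - b₂) * (k₁ + k₂)) - (k₁ - k₂) * (a₂ - b₂)) * (s u) + ((k₁ - k₂) * b₂ * k₂))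
        · intro t ht
          have h := ((((hsd t ht).pow 2).const_mul (3 * (2 * (a₂ - a₁ + b₁ - b₂)))).add
            ((hsd t ht).const_mul (2 * ((a₂ - a₁ + b₁ - b₂) * k₂ + (a₂ * k₁ - a₁ * k₂ + (b₁ - b₂) * (k₁ + k₂)) - (k₁ - k₂) * (a₂ - b₂))))).add_const ((k₁ - k₂) * b₂ * k₂)
          refine h.congr_deriv ?_
          push_cast
          ring
        · exact h12'
      have h13' : ∀ t ∈ Ioo 0 r, 6 * (2 * (a₂ - a₁ + b₁ - b₂)) * (s t) + 2 * ((a₂ - a₁ + b₁ - b₂) * k₂ + (a₂ * k₁ - a₁ * k₂ + (b₁ - b₂) * (k₁ + k₂)) - (k₁ - k₂) * (a₂ - b₂)) = 0 := by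
        intro t ht
        have := (mul_eq_zero.mp (h13 t ht)).resolve_right (hdneg t (hIoo ht)).ne
        linarith
      have h14 : ∀ t ∈ Ioo 0 r, (6 * (2 * (a₂ - a₁ + b₁ - b₂))) * (-(a₁ * s t / (k₁ + s t)) * x₁ t - (a₂ * s t / (k₂ + s t)) * x₂ t) = 0 := by
        apply deriv_zero_of_eq_zero (G := fun u => 6 * (2 * (a₂ - a₁ + b₁ - b₂)) * (s u) + 2 * ((a₂ - a₁ + b₁ - b₂) * k₂ + (a₂ * k₁ - a₁ * k₂ + (b₁ - b₂) * (k₁ + k₂)) - (k₁ - k₂) * (a₂ - b₂)))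
        · intro t ht
          exact ((hsd t ht).const_mul (6 * (2 * (a₂ - a₁ + b₁ - b₂)))).add_const (2 * ((a₂ - a₁ + b₁ - b₂) * k₂ + (a₂ * k₁ - a₁ * k₂ + (b₁ - b₂) * (k₁ + k₂)) - (k₁ - k₂) * (a₂ - b₂)))
        · exact h13'
      have hd0 : (-(a₁ * s (r / 2) / (k₁ + s (r / 2))) * x₁ (r / 2) - (a₂ * s (r / 2) / (k₂ + s (r / 2))) * x₂ (r / 2)) < 0 := hdneg (r / 2) (hIoo ht₀)
      have hs0 : 0 < s (r / 2) := hspos (r / 2) (hIoo ht₀)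
      have hg3z : (2 * (a₂ - a₁ + b₁ - b₂)) = 0 := by
        have := (mul_eq_zero.mp (h14 (r / 2) ht₀)).resolve_right hd0.ne
        linarith
      have hg2z : ((a₂ - a₁ + b₁ - b₂) * k₂ + (a₂ * k₁ - a₁ * k₂ + (b₁ - b₂) * (k₁ + k₂)) - (k₁ - k₂) * (a₂ - b₂)) = 0 := by
        linear_combination (h13' (r / 2) ht₀) / 2 - 3 * s (r / 2) * hg3z
      have hg1z : ((k₁ - k₂) * b₂ * k₂) = 0 := by
        linear_combination h12' (r / 2) ht₀ - 3 * (s (r / 2)) ^ 2 * hg3z - 2 * s (r / 2) * hg2z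
      have hg0z : (-(k₂ * ((b₁ - b₂) * (k₁ * k₂)))) = 0 := by
        linear_combination h11 (r / 2) ht₀ - (s (r / 2)) ^ 3 * hg3z - (s (r / 2)) ^ 2 * hg2z - s (r / 2) * hg1z
      have hb2z : b₂ = 0 := by
        have h1 : (k₁ - k₂) * b₂ = 0 := by
          have := mul_eq_zero.mp hg1z
          rcases this with h | h
          · exact h
          · exact absurd h hk₂.ne'
        have := (mul_eq_zero.mp h1).resolve_left hK
        exact this
      have hb1z : b₁ = 0 := by
        have h1 : k₂ * ((b₁ - b₂) * (k₁ * k₂)) = 0 := by linarith [hg0z]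
        have h2 := (mul_eq_zero.mp h1).resolve_left hk₂.ne'
        have h3 := (mul_eq_zero.mp h2).resolve_right (by positivity : (0:ℝ) < k₁ * k₂).ne'
        linarith
      have ha2z : a₂ = a₁ := by linarith [hg3z]
      have e := hd' (r / 2) ht₀
      have hfin : (k₁ - k₂) * ((-(a₁ * s (r / 2) / (k₁ + s (r / 2))) * x₁ (r / 2) - (a₂ * s (r / 2) / (k₂ + s (r / 2))) * x₂ (r / 2)) - a₁ * s (r / 2)) = 0 := by
        linear_combination e + ((s (r / 2)) ^ 2 + k₁ * s (r / 2)) * ha2z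
          + ((s (r / 2)) ^ 2 + (k₁ + k₂) * s (r / 2) + k₁ * k₂) * hb1z
          - ((s (r / 2)) ^ 2 + (k₁ + k₂) * s (r / 2) + k₁ * k₂) * hb2z
      have h2 := (mul_eq_zero.mp hfin).resolve_left hK
      have h3 : 0 < a₁ * s (r / 2) := by positivity
      nlinarith [h2, h3, hd0]
end

section
/- Let μ₁, μ₂, g₁, g₂ : [0,∞) → [0,∞) be continuously differentiable bounded functions vanishing at 0 and positive on (0,∞), b₁, b₂ ≥ 0, let s_in > 0 be a constant and define κ(σ) := (d/dσ) ln(g₁(σ)/g₂(σ)). Assume there is c > 0 such that either (A1) κ(σ) ≠ 0 and (μ₂(σ) − μ₁(σ) + b₁ − b₂)/κ(σ) ≤ −c for all σ ∈ (0, s_in), or (A2) κ(σ) ≠ 0 and (μ₂(σ) − μ₁(σ) + b₁ − b₂)/κ(σ) ≥ c for all σ ∈ (0, s_in). Then for every r ≥ c⁻¹s_in the two-species chemostat with constant inlet concentration s_in is strongly observable in time r: for any measurable bounded D : [0,r] → [0,∞), if (x₁, x₂, s) and (χ₁, χ₂, σ) are two solutions (continuous functions satisfying the integral equations) with x-components positive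 and s-components taking values in (0, s_in), and s(t) = σ(t) for all t ∈ [0,r], then (x₁(0), x₂(0)) = (χ₁(0), χ₂(0)). -/
open Real Set MeasureTheory Filter Topology

set_option maxHeartbeats 1000000



/-- Lebesgue differentiation: a.e. FTC for the primitive of an integrable function. -/
lemma ae_hasDerivAt_primitive (f : ℝ → ℝ) (hf : MeasureTheory.Integrable f) :
    ∀ᵐ x, HasDerivAt (fun t => ∫ τ in (0:ℝ)..t, f τ) (f x) x := by
  filter_upwards [(IsUnifLocDoublingMeasure.vitaliFamily (volume : Measure ℝ)
      1).ae_tendsto_average hf.locallyIntegrable] with x hx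
  set F : ℝ → ℝ := fun t => ∫ τ in (0:ℝ)..t, f τ with hF
  have key : ∀ y, F y - F x = ∫ τ in x..y, f τ := by
    intro y
    have := intervalIntegral.integral_add_adjacent_intervals
      (hf.intervalIntegrable : IntervalIntegrable f volume 0 x)
      (hf.intervalIntegrable : IntervalIntegrable f volume x y)
    simp only [hF]
    linarith [this]
  have L1 : Tendsto (slope F x) (𝓝[>] x) (𝓝 (f x)) := by
    apply Tendsto.congr' _ (hx.comp (Real.tendsto_Icc_vitaliFamily_right x))
    filter_upwards [self_mem_nhdsWithin]
    rintro y (hy : x < y)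
    have hInt : ∫ τ in Icc x y, f τ = F y - F x := by
      rw [key y, intervalIntegral.integral_of_le hy.le, MeasureTheory.integral_Icc_eq_integral_Ioc]
    simp only [Function.comp_apply, setAverage_eq, Real.volume_Icc, smul_eq_mul, hInt,
      ENNReal.toReal_ofReal (sub_nonneg.2 hy.le), Real.volume_real_Icc_of_le hy.le]
    rw [slope_def_field, div_eq_inv_mul]
  have L2 : Tendsto (slope F x) (𝓝[<] x) (𝓝 (f x)) := by
    apply Tendsto.congr' _ (hx.comp (Real.tendsto_Icc_vitaliFamily_left x))
    filter_upwards [self_mem_nhdsWithin]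
    rintro y (hy : y < x)
    have hInt : ∫ τ in Icc y x, f τ = F x - F y := by
      have h := key y
      rw [intervalIntegral.integral_symm] at h
      rw [show F x - F y = ∫ τ in y..x, f τ by linarith,
        intervalIntegral.integral_of_le hy.le, MeasureTheory.integral_Icc_eq_integral_Ioc]
    simp only [Function.comp_apply, setAverage_eq, Real.volume_Icc, smul_eq_mul, hInt,
      ENNReal.toReal_ofReal (sub_nonneg.2 hy.le), Real.volume_real_Icc_of_le hy.le]
    rw [slope_def_field, ← neg_sub (F x) (F y), ← neg_sub x y, neg_div_neg_eq, div_eq_inv_mul]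
  rw [hasDerivAt_iff_tendsto_slope, ← nhdsLT_sup_nhdsGT, tendsto_sup]
  exact ⟨L2, L1⟩


lemma gronwall_zero {d : ℝ → ℝ} {r K : ℝ} (hK : 0 ≤ K)
    (hd : ContinuousOn d (Icc 0 r))
    (h : ∀ t ∈ Icc 0 r, |d t| ≤ K * ∫ τ in (0:ℝ)..t, |d τ|) :
    ∀ t ∈ Icc 0 r, d t = 0 := by
  have habs : ContinuousOn (fun τ => |d τ|) (Icc 0 r) := hd.abs
  have hint : IntegrableOn (fun τ => |d τ|) (Icc 0 r) := habs.integrableOn_compact isCompact_Icc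
  set u : ℝ → ℝ := fun t => ∫ τ in (0:ℝ)..t, |d τ| with hu
  have huc : ContinuousOn u (Icc 0 r) := by
    have h0 : ∀ t ∈ Icc 0 r, (∫ τ in Ioc 0 t, |d τ|) = u t := by
      intro t ht
      exact (intervalIntegral.integral_of_le ht.1).symm
    exact (continuousOn_congr h0).1 (intervalIntegral.continuousOn_primitive hint)
  -- derivative of u at interior points
  have hud : ∀ t ∈ Ioo 0 r, HasDerivAt u (|d t|) t := by
    intro t ht
    have hmem : Icc 0 r ∈ 𝓝 t := Icc_mem_nhds ht.1 ht.2
    have hii : IntervalIntegrable (fun τ => |d τ|) volume 0 t := by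
      apply (hint.mono_set ?_).intervalIntegrable
      rw [uIcc_of_le ht.1.le]
      exact Icc_subset_Icc le_rfl ht.2.le
    exact intervalIntegral.integral_hasDerivAt_right hii
      (AEStronglyMeasurable.stronglyMeasurableAtFilter_of_mem
        (habs.aestronglyMeasurable measurableSet_Icc) hmem)
      (habs.continuousAt hmem)
  set v : ℝ → ℝ := fun t => u t * Real.exp (-K * t) with hv
  have hanti : AntitoneOn v (Icc 0 r) := by
    apply antitoneOn_of_deriv_nonpos (convex_Icc 0 r)
    · exact huc.mul (Real.continuous_exp.comp (by continuity)).continuousOn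
    · intro t ht
      rw [interior_Icc] at ht
      have he : HasDerivAt (fun τ : ℝ => Real.exp (-K * τ)) (Real.exp (-K * t) * (-K)) t := by
        simpa using ((hasDerivAt_id t).const_mul (-K)).exp
      exact (((hud t ht).mul he).differentiableAt).differentiableWithinAt
    · intro t ht
      rw [interior_Icc] at ht
      have he : HasDerivAt (fun τ : ℝ => Real.exp (-K * τ)) (Real.exp (-K * t) * (-K)) t := by
        simpa using ((hasDerivAt_id t).const_mul (-K)).exp
      have hder : HasDerivAt v (|d t| * Real.exp (-K * t) + u t * (Real.exp (-K * t) * -K)) t :=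
        (hud t ht).mul he
      rw [hder.deriv]
      have hle : |d t| ≤ K * u t := h t (Ioo_subset_Icc_self ht)
      nlinarith [Real.exp_pos (-K * t), abs_nonneg (d t)]
  intro t ht
  have hu0 : u 0 = 0 := by simp [hu]
  have hvt : v t ≤ v 0 := hanti (left_mem_Icc.2 (ht.1.trans ht.2)) ht ht.1
  have hv0 : v 0 = 0 := by simp [hv, hu0]
  have hupos : 0 ≤ u t := intervalIntegral.integral_nonneg ht.1 (fun τ _ => abs_nonneg _)
  have hut : u t ≤ 0 := by
    have hvt' : u t * Real.exp (-K * t) ≤ 0 := by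
      have : v t ≤ 0 := hv0 ▸ hvt
      simpa [hv] using this
    have := Real.exp_pos (-K * t)
    nlinarith
  have : |d t| ≤ 0 := (h t ht).trans (by nlinarith)
  exact abs_nonpos_iff.1 this


lemma integrableOn_of_bound {f : ℝ → ℝ} {a b C : ℝ}
    (hm : AEStronglyMeasurable f (volume.restrict (Icc a b)))
    (hb : ∀ x ∈ Icc a b, |f x| ≤ C) : IntegrableOn f (Icc a b) := by
  refine Integrable.mono' (integrable_const C) hm ?_
  exact (ae_restrict_mem measurableSet_Icc).mono fun x hx => by
    simpa [Real.norm_eq_abs] using hb x hx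


/-- Theorem 3.8: under condition (A1) or (A2), the two-species chemostat with constant inlet
concentration `s_in` and substrate constrained to `(0, s_in)` is strongly observable in any
time `r ≥ c⁻¹ s_in`. -/
theorem two_species_chemostat_strongly_observable_A1_A2
    (μ₁ μ₂ g₁ g₂ : ℝ → ℝ)
    (hμ₁C : ContDiffOn ℝ 1 μ₁ (Ici 0)) (hμ₂C : ContDiffOn ℝ 1 μ₂ (Ici 0))
    (hg₁C : ContDiffOn ℝ 1 g₁ (Ici 0)) (hg₂C : ContDiffOn ℝ 1 g₂ (Ici 0))
    (hμ₁bdd : ∃ M, ∀ u ≥ (0:ℝ), μ₁ u ≤ M) (hμ₂bdd : ∃ M, ∀ u ≥ (0:ℝ), μ₂ u ≤ M)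
    (hg₁bdd : ∃ M, ∀ u ≥ (0:ℝ), g₁ u ≤ M) (hg₂bdd : ∃ M, ∀ u ≥ (0:ℝ), g₂ u ≤ M)
    (hμ₁0 : μ₁ 0 = 0) (hμ₂0 : μ₂ 0 = 0) (hg₁0 : g₁ 0 = 0) (hg₂0 : g₂ 0 = 0)
    (hμ₁pos : ∀ u > (0:ℝ), 0 < μ₁ u) (hμ₂pos : ∀ u > (0:ℝ), 0 < μ₂ u)
    (hg₁pos : ∀ u > (0:ℝ), 0 < g₁ u) (hg₂pos : ∀ u > (0:ℝ), 0 < g₂ u)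
    (b₁ b₂ : ℝ) (hb₁ : 0 ≤ b₁) (hb₂ : 0 ≤ b₂)
    (sIn : ℝ) (hsIn : 0 < sIn)
    (κ : ℝ → ℝ)
    (hκ : ∀ u : ℝ, κ u = deriv (fun v => Real.log (g₁ v / g₂ v)) u)
    (c : ℝ) (hc : 0 < c)
    (hA : (∀ u ∈ Ioo 0 sIn, κ u ≠ 0 ∧ (μ₂ u - μ₁ u + b₁ - b₂) / κ u ≤ -c) ∨
          (∀ u ∈ Ioo 0 sIn, κ u ≠ 0 ∧ c ≤ (μ₂ u - μ₁ u + b₁ - b₂) / κ u))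
    (r : ℝ) (hr : c⁻¹ * sIn ≤ r)
    (D : ℝ → ℝ) (hDmeas : Measurable D)
    (hDnn : ∀ t ∈ Icc 0 r, 0 ≤ D t) (hDbdd : ∃ M, ∀ t ∈ Icc 0 r, D t ≤ M)
    (x₁ x₂ s χ₁ χ₂ σ : ℝ → ℝ)
    (hx₁C : ContinuousOn x₁ (Icc 0 r)) (hx₂C : ContinuousOn x₂ (Icc 0 r))
    (hsC : ContinuousOn s (Icc 0 r))
    (hχ₁C : ContinuousOn χ₁ (Icc 0 r)) (hχ₂C : ContinuousOn χ₂ (Icc 0 r))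
    (hσC : ContinuousOn σ (Icc 0 r))
    (hx₁pos : ∀ t ∈ Icc 0 r, 0 < x₁ t) (hx₂pos : ∀ t ∈ Icc 0 r, 0 < x₂ t)
    (hsmem : ∀ t ∈ Icc 0 r, s t ∈ Ioo 0 sIn)
    (hχ₁pos : ∀ t ∈ Icc 0 r, 0 < χ₁ t) (hχ₂pos : ∀ t ∈ Icc 0 r, 0 < χ₂ t)
    (hσmem : ∀ t ∈ Icc 0 r, σ t ∈ Ioo 0 sIn)
    (hx₁eq : ∀ t ∈ Icc 0 r,
      x₁ t = x₁ 0 + ∫ τ in (0:ℝ)..t, (μ₁ (s τ) - D τ - b₁) * x₁ τ)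
    (hx₂eq : ∀ t ∈ Icc 0 r,
      x₂ t = x₂ 0 + ∫ τ in (0:ℝ)..t, (μ₂ (s τ) - D τ - b₂) * x₂ τ)
    (hseq : ∀ t ∈ Icc 0 r,
      s t = s 0 + ∫ τ in (0:ℝ)..t,
        (D τ * (sIn - s τ) - g₁ (s τ) * x₁ τ - g₂ (s τ) * x₂ τ))
    (hχ₁eq : ∀ t ∈ Icc 0 r,
      χ₁ t = χ₁ 0 + ∫ τ in (0:ℝ)..t, (μ₁ (σ τ) - D τ - b₁) * χ₁ τ)
    (hχ₂eq : ∀ t ∈ Icc 0 r,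
      χ₂ t = χ₂ 0 + ∫ τ in (0:ℝ)..t, (μ₂ (σ τ) - D τ - b₂) * χ₂ τ)
    (hσeq : ∀ t ∈ Icc 0 r,
      σ t = σ 0 + ∫ τ in (0:ℝ)..t,
        (D τ * (sIn - σ τ) - g₁ (σ τ) * χ₁ τ - g₂ (σ τ) * χ₂ τ))
    (hout : ∀ t ∈ Icc 0 r, s t = σ t) :
    (x₁ 0, x₂ 0) = (χ₁ 0, χ₂ 0) := by
  by_contra hne
  have hr0 : 0 < r := lt_of_lt_of_le (mul_pos (inv_pos.2 hc) hsIn) hr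
  have h0A : (0:ℝ) ∈ Icc 0 r := ⟨le_rfl, hr0.le⟩
  have hrA : r ∈ Icc 0 r := ⟨hr0.le, le_rfl⟩
  obtain ⟨MD, hMD⟩ := hDbdd
  -- basic positivity
  have hχ₁0 : 0 < χ₁ 0 := hχ₁pos 0 h0A
  have hχ₂0 : 0 < χ₂ 0 := hχ₂pos 0 h0A
  -- continuity of compositions
  have hsIci : MapsTo s (Icc 0 r) (Ici (0:ℝ)) := fun t ht => (hsmem t ht).1.le
  have hσIci : MapsTo σ (Icc 0 r) (Ici (0:ℝ)) := fun t ht => (hσmem t ht).1.le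
  have hg1s : ContinuousOn (fun τ => g₁ (s τ)) (Icc 0 r) := hg₁C.continuousOn.comp hsC hsIci
  have hg2s : ContinuousOn (fun τ => g₂ (s τ)) (Icc 0 r) := hg₂C.continuousOn.comp hsC hsIci
  have hm1s : ContinuousOn (fun τ => μ₁ (s τ)) (Icc 0 r) := hμ₁C.continuousOn.comp hsC hsIci
  have hm2s : ContinuousOn (fun τ => μ₂ (s τ)) (Icc 0 r) := hμ₂C.continuousOn.comp hsC hsIci
  have hg1σ : ContinuousOn (fun τ => g₁ (σ τ)) (Icc 0 r) := hg₁C.continuousOn.comp hσC hσIci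
  have hg2σ : ContinuousOn (fun τ => g₂ (σ τ)) (Icc 0 r) := hg₂C.continuousOn.comp hσC hσIci
  have hm1σ : ContinuousOn (fun τ => μ₁ (σ τ)) (Icc 0 r) := hμ₁C.continuousOn.comp hσC hσIci
  have hm2σ : ContinuousOn (fun τ => μ₂ (σ τ)) (Icc 0 r) := hμ₂C.continuousOn.comp hσC hσIci
  have hDsm : AEStronglyMeasurable D (volume.restrict (Icc 0 r)) :=
    hDmeas.aestronglyMeasurable
  -- integrability of coefficient-times-solution
  have key_int : ∀ (φ ψ : ℝ → ℝ) (b : ℝ), ContinuousOn φ (Icc 0 r) → ContinuousOn ψ (Icc 0 r) →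
      IntegrableOn (fun τ => (φ τ - D τ - b) * ψ τ) (Icc 0 r) := by
    intro φ ψ b hφ hψ
    obtain ⟨Cφ, hCφ⟩ := isCompact_Icc.exists_bound_of_continuousOn hφ
    obtain ⟨Cψ, hCψ⟩ := isCompact_Icc.exists_bound_of_continuousOn hψ
    refine integrableOn_of_bound (C := (Cφ + MD + |b|) * Cψ) ?_ ?_
    · exact (((hφ.aestronglyMeasurable measurableSet_Icc).sub hDsm).sub
        aestronglyMeasurable_const).mul (hψ.aestronglyMeasurable measurableSet_Icc)
    · intro τ hτ
      have h1 : |φ τ - D τ - b| ≤ Cφ + MD + |b| := by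
        have e1 := hCφ τ hτ
        have e2 := hMD τ hτ
        have e3 := hDnn τ hτ
        rw [Real.norm_eq_abs, abs_le] at e1
        rw [abs_le]
        constructor <;> [nlinarith [le_abs_self b, neg_abs_le b];
          nlinarith [le_abs_self b, neg_abs_le b]]
      have h2 : |ψ τ| ≤ Cψ := by simpa [Real.norm_eq_abs] using hCψ τ hτ
      rw [abs_mul]
      exact mul_le_mul h1 h2 (abs_nonneg _) (le_trans (abs_nonneg _) h1)
  have key_int2 : ∀ (ψ : ℝ → ℝ), ContinuousOn ψ (Icc 0 r) →
      IntegrableOn (fun τ => D τ * ψ τ) (Icc 0 r) := by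
    intro ψ hψ
    obtain ⟨Cψ, hCψ⟩ := isCompact_Icc.exists_bound_of_continuousOn hψ
    refine integrableOn_of_bound (C := MD * Cψ) ?_ ?_
    · exact hDsm.mul (hψ.aestronglyMeasurable measurableSet_Icc)
    · intro τ hτ
      have h2 : |ψ τ| ≤ Cψ := by simpa [Real.norm_eq_abs] using hCψ τ hτ
      have e2 := hMD τ hτ
      have e3 := hDnn τ hτ
      rw [abs_mul, abs_of_nonneg e3]
      exact mul_le_mul e2 h2 (abs_nonneg _) (by linarith)
  have toII : ∀ {f : ℝ → ℝ}, IntegrableOn f (Icc 0 r) → ∀ {t : ℝ}, t ∈ Icc 0 r →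
      IntervalIntegrable f volume 0 t := by
    intro f hf t ht
    apply (hf.mono_set ?_).intervalIntegrable
    rw [uIcc_of_le ht.1]
    exact Icc_subset_Icc le_rfl ht.2
  have sub_uIcc : ∀ {t : ℝ}, t ∈ Icc 0 r → uIcc (0:ℝ) t ⊆ Icc 0 r := by
    intro t ht
    rw [uIcc_of_le ht.1]
    exact Icc_subset_Icc le_rfl ht.2
  -- Step 1: ratios are constant
  set α : ℝ := x₁ 0 / χ₁ 0 with hα
  set β : ℝ := x₂ 0 / χ₂ 0 with hβ
  have hαχ : α * χ₁ 0 = x₁ 0 := div_mul_cancel₀ _ hχ₁0.ne'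
  have hβχ : β * χ₂ 0 = x₂ 0 := div_mul_cancel₀ _ hχ₂0.ne'
  have ratio_const : ∀ (m : ℝ → ℝ) (b : ℝ) (X X0 : ℝ → ℝ) (γ : ℝ),
      ContinuousOn (fun τ => m (s τ)) (Icc 0 r) →
      ContinuousOn X (Icc 0 r) → ContinuousOn X0 (Icc 0 r) →
      γ * X0 0 = X 0 →
      (∀ t ∈ Icc 0 r, X t = X 0 + ∫ τ in (0:ℝ)..t, (m (s τ) - D τ - b) * X τ) →
      (∀ t ∈ Icc 0 r, X0 t = X0 0 + ∫ τ in (0:ℝ)..t, (m (s τ) - D τ - b) * X0 τ) →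
      ∀ t ∈ Icc 0 r, X t = γ * X0 t := by
    intro m b X X0 γ hmC hXC hX0C hγ0 hXeq hX0eq
    obtain ⟨Cm, hCm⟩ := isCompact_Icc.exists_bound_of_continuousOn hmC
    have hCm0 : 0 ≤ Cm := le_trans (norm_nonneg _) (hCm 0 h0A)
    have hMD0 : 0 ≤ MD := le_trans (hDnn 0 h0A) (hMD 0 h0A)
    set K : ℝ := Cm + MD + |b| with hK
    have hK0 : 0 ≤ K := by positivity
    have hbound : ∀ τ ∈ Icc 0 r, |m (s τ) - D τ - b| ≤ K := by
      intro τ hτ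
      have e1 := hCm τ hτ
      have e2 := hMD τ hτ
      have e3 := hDnn τ hτ
      rw [Real.norm_eq_abs, abs_le] at e1
      rw [abs_le]
      constructor <;> [nlinarith [le_abs_self b, neg_abs_le b];
        nlinarith [le_abs_self b, neg_abs_le b]]
    have hdC : ContinuousOn (fun τ => X τ - γ * X0 τ) (Icc 0 r) :=
      hXC.sub (continuousOn_const.mul hX0C)
    have hdint : ∀ t ∈ Icc 0 r,
        X t - γ * X0 t = ∫ τ in (0:ℝ)..t, (m (s τ) - D τ - b) * (X τ - γ * X0 τ) := by
      intro t ht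
      have i1 : IntervalIntegrable (fun τ => (m (s τ) - D τ - b) * X τ) volume 0 t :=
        toII (key_int _ _ _ hmC hXC) ht
      have i2 : IntervalIntegrable (fun τ => (m (s τ) - D τ - b) * X0 τ) volume 0 t :=
        toII (key_int _ _ _ hmC hX0C) ht
      have hsplit : ∫ τ in (0:ℝ)..t, (m (s τ) - D τ - b) * (X τ - γ * X0 τ)
          = (∫ τ in (0:ℝ)..t, (m (s τ) - D τ - b) * X τ)
            - γ * ∫ τ in (0:ℝ)..t, (m (s τ) - D τ - b) * X0 τ := by
        rw [← intervalIntegral.integral_const_mul, ← intervalIntegral.integral_sub i1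
          (i2.const_mul γ)]
        congr 1
        ext τ
        ring
      rw [hsplit, hXeq t ht, hX0eq t ht]
      linear_combination -hγ0
    have hgr : ∀ t ∈ Icc 0 r,
        |X t - γ * X0 t| ≤ K * ∫ τ in (0:ℝ)..t, |X τ - γ * X0 τ| := by
      intro t ht
      have iI : IntervalIntegrable (fun τ => (m (s τ) - D τ - b) * (X τ - γ * X0 τ))
          volume 0 t := by
        refine toII ?_ ht
        have : (fun τ => (m (s τ) - D τ - b) * (X τ - γ * X0 τ))
            = fun τ => ((m (s τ) - D τ - b) * X τ) - γ * ((m (s τ) - D τ - b) * X0 τ) := by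
          ext τ; ring
        rw [this]
        exact (key_int _ _ _ hmC hXC).sub ((key_int _ _ _ hmC hX0C).const_mul γ)
      calc |X t - γ * X0 t|
          = |∫ τ in (0:ℝ)..t, (m (s τ) - D τ - b) * (X τ - γ * X0 τ)| := by
            rw [← hdint t ht]
        _ ≤ ∫ τ in (0:ℝ)..t, |(m (s τ) - D τ - b) * (X τ - γ * X0 τ)| :=
            intervalIntegral.abs_integral_le_integral_abs ht.1
        _ ≤ ∫ τ in (0:ℝ)..t, K * |X τ - γ * X0 τ| := by
            refine intervalIntegral.integral_mono_on ht.1 iI.abs ?_ ?_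
            · exact toII ((hdC.abs.integrableOn_compact isCompact_Icc).const_mul K) ht
            · intro τ hτ
              have hτA : τ ∈ Icc 0 r := Icc_subset_Icc le_rfl ht.2 hτ
              rw [abs_mul]
              exact mul_le_mul_of_nonneg_right (hbound τ hτA) (abs_nonneg _)
        _ = K * ∫ τ in (0:ℝ)..t, |X τ - γ * X0 τ| := intervalIntegral.integral_const_mul _ _
    have hzero := gronwall_zero hK0 hdC hgr
    intro t ht
    have := hzero t ht
    linarith
  have hχ₁eq' : ∀ t ∈ Icc 0 r, χ₁ t = χ₁ 0 + ∫ τ in (0:ℝ)..t, (μ₁ (s τ) - D τ - b₁) * χ₁ τ := by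
    intro t ht
    rw [hχ₁eq t ht]
    congr 1
    refine intervalIntegral.integral_congr fun τ hτ => ?_
    rw [hout τ (sub_uIcc ht hτ)]
  have hχ₂eq' : ∀ t ∈ Icc 0 r, χ₂ t = χ₂ 0 + ∫ τ in (0:ℝ)..t, (μ₂ (s τ) - D τ - b₂) * χ₂ τ := by
    intro t ht
    rw [hχ₂eq t ht]
    congr 1
    refine intervalIntegral.integral_congr fun τ hτ => ?_
    rw [hout τ (sub_uIcc ht hτ)]
  have hx1rat : ∀ t ∈ Icc 0 r, x₁ t = α * χ₁ t :=
    ratio_const μ₁ b₁ x₁ χ₁ α hm1s hx₁C hχ₁C hαχ hx₁eq hχ₁eq'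
  have hx2rat : ∀ t ∈ Icc 0 r, x₂ t = β * χ₂ t :=
    ratio_const μ₂ b₂ x₂ χ₂ β hm2s hx₂C hχ₂C hβχ hx₂eq hχ₂eq'
  -- Step 2: the coupling integrand vanishes on (0, r)
  set fdiff : ℝ → ℝ :=
    fun τ => g₁ (s τ) * (x₁ τ - χ₁ τ) + g₂ (s τ) * (x₂ τ - χ₂ τ) with hfdiff
  have hfdC : ContinuousOn fdiff (Icc 0 r) :=
    (hg1s.mul (hx₁C.sub hχ₁C)).add (hg2s.mul (hx₂C.sub hχ₂C))
  have hIσ' : ∀ t ∈ Icc 0 r,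
      σ t = σ 0 + ∫ τ in (0:ℝ)..t,
        (D τ * (sIn - s τ) - g₁ (s τ) * χ₁ τ - g₂ (s τ) * χ₂ τ) := by
    intro t ht
    rw [hσeq t ht]
    congr 1
    refine intervalIntegral.integral_congr fun τ hτ => ?_
    rw [hout τ (sub_uIcc ht hτ)]
  have hIs_int : IntegrableOn
      (fun τ => D τ * (sIn - s τ) - g₁ (s τ) * x₁ τ - g₂ (s τ) * x₂ τ) (Icc 0 r) :=
    ((key_int2 _ (continuousOn_const.sub hsC)).sub
      ((hg1s.mul hx₁C).integrableOn_compact isCompact_Icc)).sub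
      ((hg2s.mul hx₂C).integrableOn_compact isCompact_Icc)
  have hIσ_int : IntegrableOn
      (fun τ => D τ * (sIn - s τ) - g₁ (s τ) * χ₁ τ - g₂ (s τ) * χ₂ τ) (Icc 0 r) :=
    ((key_int2 _ (continuousOn_const.sub hsC)).sub
      ((hg1s.mul hχ₁C).integrableOn_compact isCompact_Icc)).sub
      ((hg2s.mul hχ₂C).integrableOn_compact isCompact_Icc)
  have hF0 : ∀ t ∈ Icc 0 r, (∫ τ in (0:ℝ)..t, fdiff τ) = 0 := by
    intro t ht
    have e1 := hseq t ht
    have e2 := hIσ' t ht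
    have e0 : s 0 = σ 0 := hout 0 h0A
    have eT : s t = σ t := hout t ht
    have hsub : (∫ τ in (0:ℝ)..t, (D τ * (sIn - s τ) - g₁ (s τ) * x₁ τ - g₂ (s τ) * x₂ τ))
        - (∫ τ in (0:ℝ)..t, (D τ * (sIn - s τ) - g₁ (s τ) * χ₁ τ - g₂ (s τ) * χ₂ τ))
        = ∫ τ in (0:ℝ)..t, -fdiff τ := by
      rw [← intervalIntegral.integral_sub (toII hIs_int ht) (toII hIσ_int ht)]
      refine intervalIntegral.integral_congr fun τ hτ => ?_
      simp only [hfdiff]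
      ring
    have : (∫ τ in (0:ℝ)..t, -fdiff τ) = 0 := by
      rw [← hsub]
      linarith
    rw [intervalIntegral.integral_neg] at this
    linarith
  have hf0 : ∀ t ∈ Ioo 0 r, fdiff t = 0 := by
    intro t ht
    have hmem : Icc 0 r ∈ 𝓝 t := Icc_mem_nhds ht.1 ht.2
    have hd1 : HasDerivAt (fun u => ∫ τ in (0:ℝ)..u, fdiff τ) (fdiff t) t :=
      intervalIntegral.integral_hasDerivAt_right
        (toII (hfdC.integrableOn_compact isCompact_Icc) (Ioo_subset_Icc_self ht))
        (AEStronglyMeasurable.stronglyMeasurableAtFilter_of_mem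
          (hfdC.aestronglyMeasurable measurableSet_Icc) hmem)
        (hfdC.continuousAt hmem)
    have hd2 : HasDerivAt (fun u => ∫ τ in (0:ℝ)..u, fdiff τ) 0 t :=
      (hasDerivAt_const t (0:ℝ)).congr_of_eventuallyEq
        (eventually_of_mem hmem fun u hu => hF0 u hu)
    exact hd1.unique hd2
  -- the key pointwise identity
  have hid : ∀ t ∈ Ioo 0 r,
      g₁ (s t) * χ₁ t * (α - 1) = g₂ (s t) * χ₂ t * (1 - β) := by
    intro t ht
    have h := hf0 t ht
    have e1 := hx1rat t (Ioo_subset_Icc_self ht)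
    have e2 := hx2rat t (Ioo_subset_Icc_self ht)
    simp only [hfdiff] at h
    rw [e1, e2] at h
    ring_nf at h ⊢
    linarith
  -- Step 3: α ≠ 1, β ≠ 1, and the constant K
  have ht₀ : r / 2 ∈ Ioo 0 r := ⟨by linarith, by linarith⟩
  have ht₀A : r / 2 ∈ Icc 0 r := Ioo_subset_Icc_self ht₀
  have hP : 0 < g₁ (s (r/2)) * χ₁ (r/2) :=
    mul_pos (hg₁pos _ (hsmem _ ht₀A).1) (hχ₁pos _ ht₀A)
  have hQ : 0 < g₂ (s (r/2)) * χ₂ (r/2) :=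
    mul_pos (hg₂pos _ (hsmem _ ht₀A).1) (hχ₂pos _ ht₀A)
  have hid₀ := hid _ ht₀
  have hcontr : α = 1 → β = 1 → False := by
    intro h1 h2
    apply hne
    have e1 : x₁ 0 = χ₁ 0 := by rw [← hαχ, h1, one_mul]
    have e2 : x₂ 0 = χ₂ 0 := by rw [← hβχ, h2, one_mul]
    rw [e1, e2]
  have hα1 : α ≠ 1 := by
    intro h1
    refine hcontr h1 ?_
    have h0 : g₂ (s (r/2)) * χ₂ (r/2) * (1 - β) = 0 := by
      rw [← hid₀, h1]; ring
    rcases mul_eq_zero.1 h0 with h | h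
    · exact absurd h hQ.ne'
    · linarith
  have hβ1 : β ≠ 1 := by
    intro h2
    refine hcontr ?_ h2
    have h0 : g₁ (s (r/2)) * χ₁ (r/2) * (α - 1) = 0 := by
      rw [hid₀, h2]; ring
    rcases mul_eq_zero.1 h0 with h | h
    · exact absurd h hP.ne'
    · linarith
  -- Step 3b: the positive constant K
  set K : ℝ := (1 - β) / (α - 1) with hKdef
  have hα1' : α - 1 ≠ 0 := sub_ne_zero.2 hα1
  have hKval : ∀ t ∈ Ioo 0 r, g₁ (s t) * χ₁ t / (g₂ (s t) * χ₂ t) = K := by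
    intro t ht
    have htA := Ioo_subset_Icc_self ht
    have hg2p : 0 < g₂ (s t) := hg₂pos _ (hsmem _ htA).1
    have hc2 : 0 < χ₂ t := hχ₂pos _ htA
    rw [hKdef, div_eq_div_iff (by positivity) hα1']
    linear_combination hid t ht
  have hK0 : 0 < K := by
    rw [← hKval _ ht₀]
    positivity
  -- Step 4: the logarithmic identity
  have hlog : ∀ t ∈ Ioo 0 r,
      Real.log (g₁ (s t) / g₂ (s t)) - Real.log (χ₂ t) + Real.log (χ₁ t) = Real.log K := by
    intro t ht
    have htA := Ioo_subset_Icc_self ht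
    have hg1p : 0 < g₁ (s t) := hg₁pos _ (hsmem _ htA).1
    have hg2p : 0 < g₂ (s t) := hg₂pos _ (hsmem _ htA).1
    have hc1 : 0 < χ₁ t := hχ₁pos _ htA
    have hc2 : 0 < χ₂ t := hχ₂pos _ htA
    have hsplit : Real.log (g₁ (s t) * χ₁ t / (g₂ (s t) * χ₂ t))
        = Real.log (g₁ (s t) / g₂ (s t)) - Real.log (χ₂ t) + Real.log (χ₁ t) := by
      rw [Real.log_div (by positivity) (by positivity), Real.log_mul hg1p.ne' hc1.ne',
        Real.log_mul hg2p.ne' hc2.ne', Real.log_div hg1p.ne' hg2p.ne']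
      ring
    rw [← hsplit, hKval t ht]
  -- Step 5: a.e. derivatives from the integral equations
  have aeDeriv : ∀ (F f : ℝ → ℝ), IntegrableOn f (Icc 0 r) →
      (∀ t ∈ Icc 0 r, F t = F 0 + ∫ τ in (0:ℝ)..t, f τ) →
      ∀ᵐ t, t ∈ Ioo 0 r → HasDerivAt F (f t) t := by
    intro F f hint hFeq
    have hind : MeasureTheory.Integrable ((Icc (0:ℝ) r).indicator f) :=
      (integrable_indicator_iff measurableSet_Icc).2 hint
    filter_upwards [ae_hasDerivAt_primitive _ hind] with t hdt ht
    have hmem : Icc 0 r ∈ 𝓝 t := Icc_mem_nhds ht.1 ht.2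
    have hFeq' : ∀ u ∈ Icc 0 r,
        F u = F 0 + ∫ τ in (0:ℝ)..u, (Icc (0:ℝ) r).indicator f τ := by
      intro u hu
      rw [hFeq u hu]
      congr 1
      refine (intervalIntegral.integral_congr fun τ hτ => ?_).symm
      exact indicator_of_mem (sub_uIcc hu hτ) f
    have h2 : HasDerivAt F ((Icc (0:ℝ) r).indicator f t) t :=
      (hdt.const_add (F 0)).congr_of_eventuallyEq
        (eventually_of_mem hmem fun u hu => hFeq' u hu)
    rwa [indicator_of_mem (Ioo_subset_Icc_self ht)] at h2
  have aes := aeDeriv s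
    (fun τ => D τ * (sIn - s τ) - g₁ (s τ) * x₁ τ - g₂ (s τ) * x₂ τ) hIs_int hseq
  have aeχ₁ := aeDeriv χ₁ (fun τ => (μ₁ (σ τ) - D τ - b₁) * χ₁ τ)
    (key_int _ _ _ hm1σ hχ₁C) hχ₁eq
  have aeχ₂ := aeDeriv χ₂ (fun τ => (μ₂ (σ τ) - D τ - b₂) * χ₂ τ)
    (key_int _ _ _ hm2σ hχ₂C) hχ₂eq
  -- Step 6: the a.e. identity for the substrate derivative
  have main : ∀ᵐ t, t ∈ Ioo 0 r →
      κ (s t) * (D t * (sIn - s t) - g₁ (s t) * x₁ t - g₂ (s t) * x₂ t)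
        = μ₂ (s t) - μ₁ (s t) + b₁ - b₂ := by
    filter_upwards [aes, aeχ₁, aeχ₂] with t h1 h2 h3 ht
    have htA := Ioo_subset_Icc_self ht
    have hst : s t ∈ Ioo 0 sIn := hsmem t htA
    have hg1p : 0 < g₁ (s t) := hg₁pos _ hst.1
    have hg2p : 0 < g₂ (s t) := hg₂pos _ hst.1
    have hg1d : DifferentiableAt ℝ g₁ (s t) :=
      ((hg₁C.contDiffAt (Ici_mem_nhds hst.1)).differentiableAt one_ne_zero)
    have hg2d : DifferentiableAt ℝ g₂ (s t) :=
      ((hg₂C.contDiffAt (Ici_mem_nhds hst.1)).differentiableAt one_ne_zero)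
    have hΨdiff : DifferentiableAt ℝ (fun v => Real.log (g₁ v / g₂ v)) (s t) :=
      DifferentiableAt.log (hg1d.div hg2d hg2p.ne')
        (div_ne_zero hg1p.ne' hg2p.ne')
    have hΨd : HasDerivAt (fun v => Real.log (g₁ v / g₂ v)) (κ (s t)) (s t) := by
      rw [hκ (s t)]
      exact hΨdiff.hasDerivAt
    have hΦ1 : HasDerivAt (fun u => Real.log (g₁ (s u) / g₂ (s u)))
        (κ (s t) * (D t * (sIn - s t) - g₁ (s t) * x₁ t - g₂ (s t) * x₂ t)) t := by
      exact hΨd.comp t (h1 ht)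
    have hc1 : 0 < χ₁ t := hχ₁pos _ htA
    have hc2 : 0 < χ₂ t := hχ₂pos _ htA
    have hL1 : HasDerivAt (fun u => Real.log (χ₁ u)) (μ₁ (σ t) - D t - b₁) t := by
      have h := (h2 ht).log hc1.ne'
      rwa [mul_div_cancel_right₀ _ hc1.ne'] at h
    have hL2 : HasDerivAt (fun u => Real.log (χ₂ u)) (μ₂ (σ t) - D t - b₂) t := by
      have h := (h3 ht).log hc2.ne'
      rwa [mul_div_cancel_right₀ _ hc2.ne'] at h
    have hconst : HasDerivAt (fun u =>
        Real.log (g₁ (s u) / g₂ (s u)) - Real.log (χ₂ u) + Real.log (χ₁ u)) 0 t :=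
      (hasDerivAt_const t (Real.log K)).congr_of_eventuallyEq
        (eventually_of_mem (Ioo_mem_nhds ht.1 ht.2) fun u hu => hlog u hu)
    have huniq := (((hΦ1.sub hL2).add hL1).unique hconst)
    have hσt : σ t = s t := (hout t htA).symm
    rw [hσt] at huniq
    linarith
  -- Step 7: integrate and contradict
  have hsr := hseq r hrA
  have hIIr : IntervalIntegrable
      (fun τ => D τ * (sIn - s τ) - g₁ (s τ) * x₁ τ - g₂ (s τ) * x₂ τ) volume 0 r :=
    toII hIs_int hrA
  have hres : ∀ᵐ τ ∂(volume.restrict (Icc (0:ℝ) r)), τ ∈ Ioo 0 r := by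
    rw [Measure.restrict_congr_set ((Ioo_ae_eq_Icc (a := (0:ℝ)) (b := r))).symm]
    exact ae_restrict_mem measurableSet_Ioo
  have hs0 := hsmem 0 h0A
  have hsrm := hsmem r hrA
  have hcr : sIn ≤ c * r := by
    have h := mul_le_mul_of_nonneg_left hr hc.le
    rwa [mul_inv_cancel_left₀ hc.ne'] at h
  rcases hA with hA1 | hA2
  · have hae : (fun τ => D τ * (sIn - s τ) - g₁ (s τ) * x₁ τ - g₂ (s τ) * x₂ τ)
        ≤ᵐ[volume.restrict (Icc (0:ℝ) r)] (fun _ => -c) := by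
      filter_upwards [ae_restrict_of_ae main, hres] with τ hτ hmem
      obtain ⟨hκne, hineq⟩ := hA1 (s τ) (hsmem τ (Ioo_subset_Icc_self hmem))
      have heq := hτ hmem
      have hrepr : D τ * (sIn - s τ) - g₁ (s τ) * x₁ τ - g₂ (s τ) * x₂ τ
          = (μ₂ (s τ) - μ₁ (s τ) + b₁ - b₂) / κ (s τ) := by
        rw [eq_div_iff hκne]
        linear_combination heq
      have hgoal : D τ * (sIn - s τ) - g₁ (s τ) * x₁ τ - g₂ (s τ) * x₂ τ ≤ -c := by
        rw [hrepr]; exact hineq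
      exact hgoal
    have hle := intervalIntegral.integral_mono_ae_restrict hr0.le hIIr
      intervalIntegrable_const hae
    rw [intervalIntegral.integral_const, sub_zero, smul_eq_mul] at hle
    nlinarith [hs0.2, hsrm.1, hcr, hsr, hle]
  · have hae : (fun _ => c)
        ≤ᵐ[volume.restrict (Icc (0:ℝ) r)]
        (fun τ => D τ * (sIn - s τ) - g₁ (s τ) * x₁ τ - g₂ (s τ) * x₂ τ) := by
      filter_upwards [ae_restrict_of_ae main, hres] with τ hτ hmem
      obtain ⟨hκne, hineq⟩ := hA2 (s τ) (hsmem τ (Ioo_subset_Icc_self hmem))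
      have heq := hτ hmem
      have hrepr : D τ * (sIn - s τ) - g₁ (s τ) * x₁ τ - g₂ (s τ) * x₂ τ
          = (μ₂ (s τ) - μ₁ (s τ) + b₁ - b₂) / κ (s τ) := by
        rw [eq_div_iff hκne]
        linear_combination heq
      have hgoal : c ≤ D τ * (sIn - s τ) - g₁ (s τ) * x₁ τ - g₂ (s τ) * x₂ τ := by
        rw [hrepr]; exact hineq
      exact hgoal
    have hle := intervalIntegral.integral_mono_ae_restrict hr0.le
      intervalIntegrable_const hIIr hae
    rw [intervalIntegral.integral_const, sub_zero, smul_eq_mul] at hle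
    nlinarith [hs0.1, hsrm.2, hcr, hsr, hle]
end
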